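/- arXiv:1904.03313 — 2 statements merged into one kernel-verified Lean document; each statement's English description precedes it below -/
import Mathlib

section
/- Let G = (V,E) be a locally finite graph carrying the observation model, let S ⊆ B be finite subsets of V, and let u ∈ S. Then for every ε ∈ [0,1]: I( θ_u ; θ_{∂S} | Y^{(ε)}_B ) ≤ I( θ_u ; θ_{∂S} | Y^{(ε)}_S ), where θ_{∂S} = (θ_v)_{v∈∂S} and ∂S = {w ∈ S : ∃v ∉ S, (w,v) ∈ E}. -/
open MeasureTheory ProbabilityTheory Filter
open scoped ENNReal Classical

noncomputable section

def gball {V : Type*} (G : SimpleGraph V) (u : V) (l : ℕ) : Set V :=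
  {v | ∃ w : G.Walk u v, w.length ≤ l}

def vBoundary {V : Type*} (G : SimpleGraph V) (S : Set V) : Set V :=
  {u | u ∈ S ∧ ∃ v, v ∉ S ∧ G.Adj u v}

def Amenable {V : Type*} (G : SimpleGraph V) : Prop :=
  ∀ δ : ℝ, 0 < δ → ∃ S : Set V, S.Finite ∧ S.Nonempty ∧
    ((vBoundary G S).ncard : ℝ) < δ * (S.ncard : ℝ)

def VertexTransitive {V : Type*} (G : SimpleGraph V) : Prop :=
  ∀ u v : V, ∃ φ : G ≃g G, φ u = v

def LocallyFiniteGraph {V : Type*} (G : SimpleGraph V) : Prop :=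
  ∀ v : V, (G.neighborSet v).Finite

def graphOf {V : Type*} (E : Set (V × V)) : SimpleGraph V :=
  SimpleGraph.fromRel (fun u v => (u, v) ∈ E)

def BallIso {V W : Type*} (G : SimpleGraph V) (u : V) (H : SimpleGraph W) (o : W)
    (l : ℕ) : Prop :=
  ∃ φ : gball G u l ≃ gball H o l,
    (∀ hu : u ∈ gball G u l, ((φ ⟨u, hu⟩ : gball H o l) : W) = o) ∧
      ∀ a b : gball G u l, G.Adj a b ↔ H.Adj (φ a) (φ b)

def LocalWeakLimit {W : Type*} (Gn : ∀ n : ℕ, SimpleGraph (Fin n))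
    (H : SimpleGraph W) (o : W) : Prop :=
  ∀ l : ℕ, Tendsto
    (fun n : ℕ => (Nat.card {u : Fin n // BallIso (Gn n) u H o l} : ℝ) / n) atTop (nhds 1)

structure Model (X Y' : Type*) {V : Type*} (Q : X → X → Y' → ℝ) (E : Set (V × V))
    [Fintype X] [Fintype Y'] where
  Ω : Type
  mΩ : MeasurableSpace Ω
  P : @Measure Ω mΩ
  probP : @IsProbabilityMeasure Ω mΩ P
  θ : V → Ω → X
  Yobs : V × V → Ω → Y'
  U : V → Ω → ℝ
  measθ : ∀ v, @Measurable Ω X mΩ ⊤ (θ v)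
  measY : ∀ e, @Measurable Ω Y' mΩ ⊤ (Yobs e)
  measU : ∀ v, @Measurable Ω ℝ mΩ _ (U v)
  lawθY : ∀ (S : Finset V) (F : Finset (V × V)),
    (∀ e ∈ F, e ∈ E ∧ e.1 ∈ S ∧ e.2 ∈ S) →
    ∀ (σ : V → X) (y : V × V → Y'),
      (P {ω | (∀ v ∈ S, θ v ω = σ v) ∧ ∀ e ∈ F, Yobs e ω = y e}).toReal
        = ((Fintype.card X : ℝ)⁻¹) ^ S.card * ∏ e ∈ F, Q (σ e.1) (σ e.2) (y e)
  lawU : ∀ (T : Finset V) (a : V → ℝ), (∀ v, a v ∈ Set.Icc (0:ℝ) 1) →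
    ∀ (S : Finset V) (F : Finset (V × V)) (σ : V → X) (y : V × V → Y'),
      (P {ω | (∀ v ∈ T, U v ω ≤ a v) ∧ (∀ v ∈ S, θ v ω = σ v) ∧
          ∀ e ∈ F, Yobs e ω = y e}).toReal
        = (∏ v ∈ T, a v) *
          (P {ω | (∀ v ∈ S, θ v ω = σ v) ∧ ∀ e ∈ F, Yobs e ω = y e}).toReal

attribute [instance] Model.mΩ

namespace Model

variable {X Y' V : Type*} [Fintype X] [Fintype Y'] {Q : X → X → Y' → ℝ} {E : Set (V × V)}

def ξ (M : Model X Y' Q E) (ε : ℝ) (v : V) (ω : M.Ω) : Option X :=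
  if M.U v ω ≤ ε then some (M.θ v ω) else none

def obsAlg (M : Model X Y' Q E) (ε : ℝ) (S : Set V) : MeasurableSpace M.Ω :=
  (⨆ e ∈ {e : V × V | e ∈ E ∧ e.1 ∈ S ∧ e.2 ∈ S}, MeasurableSpace.comap (M.Yobs e) ⊤) ⊔
    ⨆ v ∈ S, MeasurableSpace.comap (M.ξ ε v) ⊤

def marg (M : Model X Y' Q E) (ε : ℝ) (S : Set V) (u : V) (x : X) : M.Ω → ℝ :=
  M.P[Set.indicator {ω | M.θ u ω = x} (fun _ => (1 : ℝ)) | M.obsAlg ε S]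

end Model

def riskOf {X Y' : Type*} [Fintype X] [Fintype Y'] {n : ℕ} {Q : X → X → Y' → ℝ}
    {E : Set (Fin n × Fin n)} (M : Model X Y' Q E) (f : X → ℝ)
    (Xh : M.Ω → Fin n → Fin n → ℝ) : ℝ :=
  ((n : ℝ) ^ 2)⁻¹ * ∫ ω, (∑ u, ∑ v, (f (M.θ u ω) * f (M.θ v ω) - Xh ω u v) ^ 2) ∂M.P


/-- Shannon entropy of (the law of) a random variable with (essentially) finitely many
values, with the convention 0 log 0 = 0. -/
def entropy {Ω α : Type*} [MeasurableSpace Ω] (P : Measure Ω) (Z : Ω → α) : ℝ :=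
  -∑' a : α, ((P (Z ⁻¹' {a})).toReal * Real.log (P (Z ⁻¹' {a})).toReal)

/-- Conditional mutual information I(A;B|C) = H(A,C) + H(B,C) - H(A,B,C) - H(C). -/
def condMI {Ω α β γ : Type*} [MeasurableSpace Ω] (P : Measure Ω)
    (A : Ω → α) (B : Ω → β) (C : Ω → γ) : ℝ :=
  entropy P (fun ω => (A ω, C ω)) + entropy P (fun ω => (B ω, C ω))
    - entropy P (fun ω => (A ω, B ω, C ω)) - entropy P C

namespace Model

variable {X Y' V : Type*} [Fintype X] [Fintype Y'] {Q : X → X → Y' → ℝ} {E : Set (V × V)}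

/-- The labels on a subset of vertices, as a single (masked) random variable. -/
def thetaOn (M : Model X Y' Q E) (S : Set V) : M.Ω → (V → Option X) :=
  fun ω v => if v ∈ S then some (M.θ v ω) else none

/-- All the observations available in the region S (edge observations on edges inside S
and side information on S), as a single (masked) random variable. -/
def obsRV (M : Model X Y' Q E) (ε : ℝ) (S : Set V) :
    M.Ω → (V × V → Option Y') × (V → Option (Option X)) :=
  fun ω =>
    (fun e => if e ∈ E ∧ e.1 ∈ S ∧ e.2 ∈ S then some (M.Yobs e ω) else none,
     fun v => if v ∈ S then some (M.ξ ε v ω) else none)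

end Model
set_option linter.unusedSectionVars false
set_option linter.unreachableTactic false
set_option linter.unusedTactic false
set_option linter.unusedVariables false
set_option maxHeartbeats 1000000

section general
variable {Ω : Type*} [MeasurableSpace Ω]

def DiscRV {Ω α : Type*} [MeasurableSpace Ω] (Z : Ω → α) : Prop :=
  (Set.range Z).Finite ∧ ∀ a, MeasurableSet (Z ⁻¹' {a})

lemma DiscRV.of_finite {ι : Type*} [Finite ι] (k : Ω → ι)
    (h : ∀ i, MeasurableSet (k ⁻¹' {i})) : DiscRV k :=
  ⟨Set.toFinite _, h⟩

lemma DiscRV.preimage' {α : Type*} {Z : Ω → α} (hZ : DiscRV Z) (s : Set α) :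
    MeasurableSet (Z ⁻¹' s) := by
  classical
  have : Z ⁻¹' s = ⋃ a ∈ {a ∈ hZ.1.toFinset | a ∈ s}, Z ⁻¹' {a} := by
    ext ω
    simp only [Set.mem_preimage, Set.mem_iUnion, Finset.mem_filter, Set.Finite.mem_toFinset,
      Set.mem_singleton_iff, exists_prop]
    constructor
    · intro h; exact ⟨Z ω, ⟨⟨Set.mem_range_self ω, h⟩, rfl⟩⟩
    · rintro ⟨a, ⟨-, ha⟩, rfl⟩; exact ha
  rw [this]
  exact Finset.measurableSet_biUnion _ fun a _ => hZ.2 a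

lemma DiscRV.comp' {α β : Type*} {Z : Ω → α} (hZ : DiscRV Z) (g : α → β) :
    DiscRV (fun ω => g (Z ω)) := by
  refine ⟨(hZ.1.image g).subset ?_, fun b => hZ.preimage' (g ⁻¹' {b})⟩
  rintro _ ⟨ω, rfl⟩; exact Set.mem_image_of_mem g (Set.mem_range_self ω)

lemma DiscRV.pair {α β : Type*} {Z : Ω → α} {W : Ω → β} (hZ : DiscRV Z)
    (hW : DiscRV W) : DiscRV (fun ω => (Z ω, W ω)) := by
  constructor
  · exact ((hZ.1.prod hW.1)).subset
      (by rintro _ ⟨ω, rfl⟩; exact ⟨Set.mem_range_self ω, Set.mem_range_self ω⟩)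
  · rintro ⟨a, b⟩
    have : (fun ω => (Z ω, W ω)) ⁻¹' {(a, b)} = Z ⁻¹' {a} ∩ W ⁻¹' {b} := by
      ext ω; simp [Prod.ext_iff]
    rw [this]; exact (hZ.2 a).inter (hW.2 b)

variable (P : Measure Ω) [IsProbabilityMeasure P]

lemma partition_inter {α : Type*} {Z : Ω → α} (hZ : DiscRV Z)
    {R : Finset α} (hR : Set.range Z ⊆ ↑R) {Ev : Set Ω} (hEv : MeasurableSet Ev) (s : Set α) :
    (P (Ev ∩ Z ⁻¹' s)).toReal = ∑ a ∈ {a ∈ R | a ∈ s}, (P (Ev ∩ Z ⁻¹' {a})).toReal := by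
  classical
  have hun : Ev ∩ Z ⁻¹' s = ⋃ a ∈ {a ∈ R | a ∈ s}, (Ev ∩ Z ⁻¹' {a}) := by
    ext ω
    simp only [Set.mem_inter_iff, Set.mem_preimage, Set.mem_iUnion, Finset.mem_filter,
      Set.mem_singleton_iff, exists_prop]
    constructor
    · rintro ⟨h1, h2⟩; exact ⟨Z ω, ⟨hR (Set.mem_range_self ω), h2⟩, h1, rfl⟩
    · rintro ⟨a, ⟨-, ha⟩, h1, rfl⟩; exact ⟨h1, ha⟩
  rw [hun, measure_biUnion_finset ?_ (fun a _ => hEv.inter (hZ.2 a)), ENNReal.toReal_sum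
    (fun a _ => measure_ne_top _ _)]
  intro a _ b _ hab
  refine Set.disjoint_left.mpr ?_
  rintro ω ⟨-, h1⟩ ⟨-, h2⟩
  exact hab (h1.symm.trans h2)

lemma meas_preimage_sum {α : Type*} {Z : Ω → α} (hZ : DiscRV Z)
    {R : Finset α} (hR : Set.range Z ⊆ ↑R) (s : Set α) :
    (P (Z ⁻¹' s)).toReal = ∑ a ∈ {a ∈ R | a ∈ s}, (P (Z ⁻¹' {a})).toReal := by
  have := partition_inter P hZ hR (Ev := Set.univ) MeasurableSet.univ s
  simpa using this

lemma entropy_comp_eq_sum {α β : Type*} {Z : Ω → α} (hZ : DiscRV Z)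
    {R : Finset α} (hR : Set.range Z ⊆ ↑R) (g : α → β) :
    entropy P (fun ω => g (Z ω))
      = -∑ t ∈ R, (P (Z ⁻¹' {t})).toReal
          * Real.log (P ((fun ω => g (Z ω)) ⁻¹' {g t})).toReal := by
  classical
  rw [entropy]
  congr 1
  rw [tsum_eq_sum (s := R.image g) ?_]
  · rw [← Finset.sum_fiberwise_of_maps_to (fun t ht => Finset.mem_image_of_mem g ht)
      (fun t => (P (Z ⁻¹' {t})).toReal * Real.log (P ((fun ω => g (Z ω)) ⁻¹' {g t})).toReal)]
    refine Finset.sum_congr rfl fun b hb => ?_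
    have hpre : ∀ b : β, ((fun ω => g (Z ω)) ⁻¹' {b}) = Z ⁻¹' (g ⁻¹' {b}) := fun b => rfl
    have hval : (P ((fun ω => g (Z ω)) ⁻¹' {b})).toReal
        = ∑ t ∈ {t ∈ R | g t = b}, (P (Z ⁻¹' {t})).toReal := by
      rw [hpre, meas_preimage_sum P hZ hR (g ⁻¹' {b})]
      rfl
    rw [hval, Finset.sum_mul]
    refine Finset.sum_congr rfl fun t ht => ?_
    have : g t = b := (Finset.mem_filter.mp ht).2
    rw [this, hval]
  · intro b hb
    have : ((fun ω => g (Z ω)) ⁻¹' {b}) = ∅ := by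
      ext ω
      simp only [Set.mem_preimage, Set.mem_singleton_iff, Set.mem_empty_iff_false, iff_false]
      intro h
      exact hb (h ▸ Finset.mem_image_of_mem g (by exact_mod_cast hR (Set.mem_range_self ω)))
    simp [this]

lemma marg_fst {α β : Type*} {Z : Ω → α} {W : Ω → β} (hZ : DiscRV Z) (hW : DiscRV W) (w : β) :
    (P (W ⁻¹' {w})).toReal
      = ∑ a ∈ hZ.1.toFinset, (P ((fun ω => (Z ω, W ω)) ⁻¹' {(a, w)})).toReal := by
  classical
  have h := partition_inter P hZ (R := hZ.1.toFinset)
    (by rintro _ ⟨ω, rfl⟩; exact hZ.1.mem_toFinset.mpr (Set.mem_range_self ω))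
    (hW.preimage' {w}) Set.univ
  simp only [Set.preimage_univ, Set.inter_univ, Set.mem_univ, Finset.filter_true] at h
  rw [h]
  refine Finset.sum_congr (by simp) fun a _ => ?_
  have hs : (W ⁻¹' {w} ∩ Z ⁻¹' {a}) = (fun ω => (Z ω, W ω)) ⁻¹' {(a, w)} := by
    ext ω; simp [Prod.ext_iff, and_comm]
  rw [hs]

lemma sum_pT_eq_one {α : Type*} {Z : Ω → α} (hZ : DiscRV Z)
    {R : Finset α} (hR : Set.range Z ⊆ ↑R) :
    ∑ t ∈ R, (P (Z ⁻¹' {t})).toReal = 1 := by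
  have h := meas_preimage_sum P hZ hR Set.univ
  simp only [Set.preimage_univ, Set.mem_univ, Finset.filter_true] at h
  rw [← h]
  simp

lemma logterm_ge {pt pac pdc pc : ℝ} (h0 : 0 ≤ pt) (h1 : pt ≤ pac) (h2 : pt ≤ pdc)
    (h3 : pt ≤ pc) (hac : 0 ≤ pac) (hdc : 0 ≤ pdc) (hc : 0 ≤ pc) :
    pt - pac * pdc / pc
      ≤ pt * Real.log pt + pt * Real.log pc - pt * Real.log pac - pt * Real.log pdc := by
  rcases eq_or_lt_of_le h0 with h | hpt
  · rw [← h]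
    simp only [zero_sub, zero_mul, add_zero, sub_zero, zero_add, neg_nonpos]
    positivity
  · have hac' : 0 < pac := lt_of_lt_of_le hpt h1
    have hdc' : 0 < pdc := lt_of_lt_of_le hpt h2
    have hc' : 0 < pc := lt_of_lt_of_le hpt h3
    have hy : 0 < pac * pdc / (pt * pc) := by positivity
    have hl := Real.log_le_sub_one_of_pos hy
    have h5 : Real.log (pac * pdc / (pt * pc))
        = Real.log pac + Real.log pdc - Real.log pt - Real.log pc := by
      rw [Real.log_div (by positivity) (by positivity), Real.log_mul hac'.ne' hdc'.ne',
        Real.log_mul hpt.ne' hc'.ne']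
      ring
    rw [h5] at hl
    have h4 := mul_le_mul_of_nonneg_left hl h0
    have h6 : pt * (pac * pdc / (pt * pc)) = pac * pdc / pc := by
      field_simp
    nlinarith [h4, h6]

variable {α δ γ : Type*} (A : Ω → α) (D : Ω → δ) (C : Ω → γ)

def pJ3 (a : α) (d : δ) (c : γ) : ℝ := (P ((fun ω => (A ω, D ω, C ω)) ⁻¹' {(a, d, c)})).toReal
def pAC2 (a : α) (c : γ) : ℝ := (P ((fun ω => (A ω, C ω)) ⁻¹' {(a, c)})).toReal
def pDC2 (d : δ) (c : γ) : ℝ := (P ((fun ω => (D ω, C ω)) ⁻¹' {(d, c)})).toReal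
def pC1 (c : γ) : ℝ := (P (C ⁻¹' {c})).toReal

lemma condMI_repr (hA : DiscRV A) (hD : DiscRV D) (hC : DiscRV C) :
    condMI P A D C
      = ∑ t ∈ hA.1.toFinset ×ˢ hD.1.toFinset ×ˢ hC.1.toFinset,
          (pJ3 P A D C t.1 t.2.1 t.2.2 * Real.log (pJ3 P A D C t.1 t.2.1 t.2.2)
            + pJ3 P A D C t.1 t.2.1 t.2.2 * Real.log (pC1 P C t.2.2)
            - pJ3 P A D C t.1 t.2.1 t.2.2 * Real.log (pAC2 P A C t.1 t.2.2)
            - pJ3 P A D C t.1 t.2.1 t.2.2 * Real.log (pDC2 P D C t.2.1 t.2.2)) := by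
  classical
  have hT : DiscRV (fun ω => (A ω, D ω, C ω)) := hA.pair (hD.pair hC)
  set R : Finset (α × δ × γ) := hA.1.toFinset ×ˢ hD.1.toFinset ×ˢ hC.1.toFinset with hRdef
  have hR : Set.range (fun ω => (A ω, D ω, C ω)) ⊆ ↑R := by
    rintro _ ⟨ω, rfl⟩
    simp [hRdef, Finset.mem_product, Set.Finite.mem_toFinset, Set.mem_range_self]
  have eAC : entropy P (fun ω => (A ω, C ω))
      = -∑ t ∈ R, pJ3 P A D C t.1 t.2.1 t.2.2 * Real.log (pAC2 P A C t.1 t.2.2) :=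
    entropy_comp_eq_sum P hT hR (fun t => (t.1, t.2.2))
  have eDC : entropy P (fun ω => (D ω, C ω))
      = -∑ t ∈ R, pJ3 P A D C t.1 t.2.1 t.2.2 * Real.log (pDC2 P D C t.2.1 t.2.2) :=
    entropy_comp_eq_sum P hT hR (fun t => t.2)
  have eT : entropy P (fun ω => (A ω, D ω, C ω))
      = -∑ t ∈ R, pJ3 P A D C t.1 t.2.1 t.2.2 * Real.log (pJ3 P A D C t.1 t.2.1 t.2.2) :=
    entropy_comp_eq_sum P hT hR (fun t => t)
  have eC : entropy P C
      = -∑ t ∈ R, pJ3 P A D C t.1 t.2.1 t.2.2 * Real.log (pC1 P C t.2.2) :=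
    entropy_comp_eq_sum P hT hR (fun t => t.2.2)
  rw [condMI, eAC, eDC, eT, eC]
  rw [Finset.sum_sub_distrib, Finset.sum_sub_distrib, Finset.sum_add_distrib]
  ring

lemma pJ3_le_pAC2 (a : α) (d : δ) (c : γ) : pJ3 P A D C a d c ≤ pAC2 P A C a c := by
  refine ENNReal.toReal_mono (measure_ne_top _ _) (measure_mono ?_)
  rintro ω h
  simp only [Set.mem_preimage, Set.mem_singleton_iff, Prod.mk.injEq] at h ⊢
  exact ⟨h.1, h.2.2⟩

lemma pJ3_le_pDC2 (a : α) (d : δ) (c : γ) : pJ3 P A D C a d c ≤ pDC2 P D C d c := by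
  refine ENNReal.toReal_mono (measure_ne_top _ _) (measure_mono ?_)
  rintro ω h
  simp only [Set.mem_preimage, Set.mem_singleton_iff, Prod.mk.injEq] at h ⊢
  exact ⟨h.2.1, h.2.2⟩

lemma pJ3_le_pC1 (a : α) (d : δ) (c : γ) : pJ3 P A D C a d c ≤ pC1 P C c := by
  refine ENNReal.toReal_mono (measure_ne_top _ _) (measure_mono ?_)
  rintro ω h
  simp only [Set.mem_preimage, Set.mem_singleton_iff, Prod.mk.injEq] at h ⊢
  exact h.2.2

lemma condMI_nonneg (hA : DiscRV A) (hD : DiscRV D) (hC : DiscRV C) :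
    0 ≤ condMI P A D C := by
  classical
  rw [condMI_repr P A D C hA hD hC]
  have hT : DiscRV (fun ω => (A ω, D ω, C ω)) := hA.pair (hD.pair hC)
  have hR : Set.range (fun ω => (A ω, D ω, C ω))
      ⊆ ↑(hA.1.toFinset ×ˢ hD.1.toFinset ×ˢ hC.1.toFinset) := by
    rintro _ ⟨ω, rfl⟩
    simp [Finset.mem_product, Set.Finite.mem_toFinset, Set.mem_range_self]
  have hlow : ∀ t ∈ hA.1.toFinset ×ˢ hD.1.toFinset ×ˢ hC.1.toFinset,
      pJ3 P A D C t.1 t.2.1 t.2.2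
          - pAC2 P A C t.1 t.2.2 * pDC2 P D C t.2.1 t.2.2 / pC1 P C t.2.2
        ≤ pJ3 P A D C t.1 t.2.1 t.2.2 * Real.log (pJ3 P A D C t.1 t.2.1 t.2.2)
            + pJ3 P A D C t.1 t.2.1 t.2.2 * Real.log (pC1 P C t.2.2)
            - pJ3 P A D C t.1 t.2.1 t.2.2 * Real.log (pAC2 P A C t.1 t.2.2)
            - pJ3 P A D C t.1 t.2.1 t.2.2 * Real.log (pDC2 P D C t.2.1 t.2.2) := by
    intro t _
    exact logterm_ge ENNReal.toReal_nonneg (pJ3_le_pAC2 P A D C _ _ _)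
      (pJ3_le_pDC2 P A D C _ _ _) (pJ3_le_pC1 P A D C _ _ _)
      ENNReal.toReal_nonneg ENNReal.toReal_nonneg ENNReal.toReal_nonneg
  have hs := Finset.sum_le_sum hlow
  rw [Finset.sum_sub_distrib] at hs
  have h1 : ∑ t ∈ hA.1.toFinset ×ˢ hD.1.toFinset ×ˢ hC.1.toFinset,
      pJ3 P A D C t.1 t.2.1 t.2.2 = 1 := by
    have := sum_pT_eq_one P hT hR
    rw [← this]
    rfl
  have h2 : ∑ t ∈ hA.1.toFinset ×ˢ hD.1.toFinset ×ˢ hC.1.toFinset,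
      pAC2 P A C t.1 t.2.2 * pDC2 P D C t.2.1 t.2.2 / pC1 P C t.2.2 = 1 := by
    rw [Finset.sum_product]
    have hswap : ∀ a ∈ hA.1.toFinset,
        ∑ x ∈ hD.1.toFinset ×ˢ hC.1.toFinset,
          pAC2 P A C a x.2 * pDC2 P D C x.1 x.2 / pC1 P C x.2
        = ∑ c ∈ hC.1.toFinset, ∑ d ∈ hD.1.toFinset,
            pAC2 P A C a c * pDC2 P D C d c / pC1 P C c := by
      intro a _
      rw [Finset.sum_product]
      exact Finset.sum_comm
    rw [Finset.sum_congr rfl hswap, Finset.sum_comm]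
    have hc : ∀ c ∈ hC.1.toFinset,
        ∑ a ∈ hA.1.toFinset, ∑ d ∈ hD.1.toFinset,
          pAC2 P A C a c * pDC2 P D C d c / pC1 P C c = pC1 P C c := by
      intro c _
      have hmargD : ∑ d ∈ hD.1.toFinset, pDC2 P D C d c = pC1 P C c :=
        (marg_fst P hD hC c).symm
      have hmargA : ∑ a ∈ hA.1.toFinset, pAC2 P A C a c = pC1 P C c :=
        (marg_fst P hA hC c).symm
      have hstep : ∀ a, ∑ d ∈ hD.1.toFinset, pAC2 P A C a c * pDC2 P D C d c / pC1 P C c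
          = pAC2 P A C a c * pC1 P C c / pC1 P C c := by
        intro a
        rw [← Finset.sum_div, ← Finset.mul_sum, hmargD]
      rw [Finset.sum_congr rfl (fun a _ => hstep a)]
      rcases eq_or_ne (pC1 P C c) 0 with h | h
      · simp [h]
      · rw [Finset.sum_congr rfl (fun a _ => by rw [mul_div_assoc, div_self h, mul_one]),
          hmargA]
    rw [Finset.sum_congr rfl hc]
    exact sum_pT_eq_one P hC
      (by rintro _ ⟨ω, rfl⟩; simp [Set.Finite.mem_toFinset, Set.mem_range_self])
  rw [h1, h2] at hs
  linarith

lemma condMI_eq_zero (hA : DiscRV A) (hD : DiscRV D) (hC : DiscRV C)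
    (hind : ∀ (a : α) (d : δ) (c : γ), 0 < pJ3 P A D C a d c →
      pJ3 P A D C a d c * pC1 P C c = pAC2 P A C a c * pDC2 P D C d c) :
    condMI P A D C = 0 := by
  classical
  rw [condMI_repr P A D C hA hD hC]
  refine Finset.sum_eq_zero ?_
  rintro ⟨a, d, c⟩ _
  simp only []
  rcases eq_or_lt_of_le (show (0:ℝ) ≤ pJ3 P A D C a d c from ENNReal.toReal_nonneg) with h | h
  · rw [← h]; ring
  · have hac : 0 < pAC2 P A C a c := lt_of_lt_of_le h (pJ3_le_pAC2 P A D C a d c)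
    have hdc : 0 < pDC2 P D C d c := lt_of_lt_of_le h (pJ3_le_pDC2 P A D C a d c)
    have hc : 0 < pC1 P C c := lt_of_lt_of_le h (pJ3_le_pC1 P A D C a d c)
    have heq := hind a d c h
    have hl := congrArg Real.log heq
    rw [Real.log_mul h.ne' hc.ne', Real.log_mul hac.ne' hdc.ne'] at hl
    nlinarith [hl]

end general

section generalInj
variable {Ω : Type*} [MeasurableSpace Ω] (P : Measure Ω)

lemma entropy_comp_injective {α β : Type*} (Z : Ω → α) {f : α → β}
    (hf : Function.Injective f) : entropy P (fun ω => f (Z ω)) = entropy P Z := by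
  rw [entropy, entropy, neg_inj]
  set F : β → ℝ := fun b => (P ((fun ω => f (Z ω)) ⁻¹' {b})).toReal
      * Real.log (P ((fun ω => f (Z ω)) ⁻¹' {b})).toReal with hF
  set G : α → ℝ := fun a => (P (Z ⁻¹' {a})).toReal * Real.log (P (Z ⁻¹' {a})).toReal with hG
  have hpre : ∀ a : α, ((fun ω => f (Z ω)) ⁻¹' {f a}) = Z ⁻¹' {a} := by
    intro a
    ext ω
    simp only [Set.mem_preimage, Set.mem_singleton_iff]
    exact ⟨fun h => hf h, fun h => by rw [h]⟩
  refine tsum_eq_tsum_of_ne_zero_bij (fun x => f x.1) ?_ ?_ ?_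
  · rintro ⟨a, ha⟩ ⟨a', ha'⟩ h
    simpa using hf h
  · intro b hb
    have hne : ((fun ω => f (Z ω)) ⁻¹' {b}).Nonempty := by
      by_contra hemp
      rw [Set.not_nonempty_iff_eq_empty] at hemp
      apply hb
      simp [F, hemp]
    obtain ⟨ω, hω⟩ := hne
    have hba : b = f (Z ω) := (Set.mem_singleton_iff.mp hω).symm
    refine ⟨⟨Z ω, ?_⟩, hba.symm⟩
    have h2 : F (f (Z ω)) ≠ 0 := hba ▸ hb
    simp only [hF] at h2
    rw [hpre] at h2
    exact h2
  · rintro ⟨a, ha⟩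
    simp only [F, G, hpre]

lemma condMI_mono_of_factor {α β δ γ : Type*} [IsProbabilityMeasure P]
    (A : Ω → α) (B : Ω → β) (D : Ω → δ) (g : δ → γ)
    (h2 : 0 ≤ condMI P A D (fun ω => g (D ω)))
    (h3 : condMI P A D (fun ω => (B ω, g (D ω))) = 0) :
    condMI P A B D ≤ condMI P A B (fun ω => g (D ω)) := by
  have e1 : entropy P (fun ω => (D ω, g (D ω))) = entropy P D := by
    have h := entropy_comp_injective P D (f := fun d => (d, g d))
      (fun a b h => congrArg Prod.fst h)
    exact h
  have e2 : entropy P (fun ω => (A ω, D ω, g (D ω)))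
      = entropy P (fun ω => (A ω, D ω)) := by
    have h := entropy_comp_injective P (fun ω => (A ω, D ω))
      (f := fun p : α × δ => (p.1, p.2, g p.2)) ?_
    · exact h
    · rintro ⟨a, d⟩ ⟨a', d'⟩ h
      simp only [Prod.mk.injEq] at h
      simp [h.1, h.2.1]
  have e3 : entropy P (fun ω => (D ω, B ω, g (D ω)))
      = entropy P (fun ω => (B ω, D ω)) := by
    have h := entropy_comp_injective P (fun ω => (B ω, D ω))
      (f := fun p : β × δ => (p.2, p.1, g p.2)) ?_
    · exact h
    · rintro ⟨b, d⟩ ⟨b', d'⟩ h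
      simp only [Prod.mk.injEq] at h
      simp [h.1, h.2.1]
  have e4 : entropy P (fun ω => (A ω, D ω, B ω, g (D ω)))
      = entropy P (fun ω => (A ω, B ω, D ω)) := by
    have h := entropy_comp_injective P (fun ω => (A ω, B ω, D ω))
      (f := fun p : α × β × δ => (p.1, p.2.2, p.2.1, g p.2.2)) ?_
    · exact h
    · rintro ⟨a, b, d⟩ ⟨a', b', d'⟩ h
      simp only [Prod.mk.injEq] at h
      simp [h.1, h.2.1, h.2.2.1]
  rw [condMI] at h2 h3 ⊢
  rw [condMI]
  rw [e1, e2] at h2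
  rw [e3, e4] at h3
  linarith

end generalInj
set_option linter.unusedSectionVars false
set_option linter.unreachableTactic false
set_option linter.unusedTactic false
set_option linter.unusedVariables false
set_option maxHeartbeats 1000000

namespace Model
variable {X Y' V : Type*} [Fintype X] [Fintype Y'] [Nonempty X] [Nonempty Y']
  {Q : X → X → Y' → ℝ} {E : Set (V × V)} (M : Model X Y' Q E)

lemma measθset (v : V) (x : X) : MeasurableSet {ω | M.θ v ω = x} :=
  M.measθ v (show MeasurableSet[⊤] {x} from trivial)

lemma measYset (e : V × V) (y : Y') : MeasurableSet {ω | M.Yobs e ω = y} :=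
  M.measY e (show MeasurableSet[⊤] {y} from trivial)

lemma measUset (v : V) (ε : ℝ) : MeasurableSet {ω | M.U v ω ≤ ε} :=
  M.measU v measurableSet_Iic

lemma measξset (ε : ℝ) (v : V) (o : Option X) : MeasurableSet {ω | M.ξ ε v ω = o} := by
  rcases o with _ | x
  · have : {ω | M.ξ ε v ω = none} = {ω | M.U v ω ≤ ε}ᶜ := by
      ext ω
      simp only [ξ, Set.mem_setOf_eq, Set.mem_compl_iff]
      by_cases h : M.U v ω ≤ ε <;> simp [h]
    rw [this]
    exact (M.measUset v ε).compl
  · have : {ω | M.ξ ε v ω = some x} = {ω | M.U v ω ≤ ε} ∩ {ω | M.θ v ω = x} := by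
      ext ω
      simp only [ξ, Set.mem_setOf_eq, Set.mem_inter_iff]
      by_cases h : M.U v ω ≤ ε <;> simp [h]
    rw [this]
    exact (M.measUset v ε).inter (M.measθset v x)

/-- The finset of observed edges inside a finset of vertices. -/
def obsEdges (B : Finset V) : Finset (V × V) := {e ∈ B ×ˢ B | e ∈ E}

lemma mem_obsEdges {B : Finset V} {e : V × V} :
    e ∈ obsEdges (E := E) B ↔ e ∈ E ∧ e.1 ∈ B ∧ e.2 ∈ B := by
  simp [obsEdges, Finset.mem_filter, Finset.mem_product]
  tauto

lemma disc_thetaOn {W : Set V} (hW : W.Finite) : DiscRV (M.thetaOn W) := by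
  classical
  haveI : Fintype ↥(hW.toFinset) := FinsetCoe.fintype _
  set k : M.Ω → (↥(hW.toFinset) → X) := fun ω v => M.θ v ω with hk
  have hkd : DiscRV k := by
    refine DiscRV.of_finite k fun f => ?_
    have : k ⁻¹' {f} = ⋂ v : ↥(hW.toFinset), {ω | M.θ v ω = f v} := by
      ext ω
      simp only [Set.mem_preimage, Set.mem_singleton_iff, Set.mem_iInter, Set.mem_setOf_eq, hk,
        funext_iff]
    rw [this]
    exact MeasurableSet.iInter fun v => M.measθset v (f v)
  have heq : M.thetaOn W = fun ω =>
      (fun f : ↥(hW.toFinset) → X => fun v : V =>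
        if h : v ∈ hW.toFinset then some (f ⟨v, h⟩) else none) (k ω) := by
    funext ω v
    simp only [thetaOn, hk]
    by_cases h : v ∈ W
    · rw [if_pos h, dif_pos (hW.mem_toFinset.mpr h)]
    · rw [if_neg h, dif_neg (fun hc => h (hW.mem_toFinset.mp hc))]
  rw [heq]
  exact hkd.comp' (fun f : ↥(hW.toFinset) → X => fun v : V =>
    if h : v ∈ hW.toFinset then some (f ⟨v, h⟩) else none)

lemma disc_obsRV (ε : ℝ) (B : Finset V) : DiscRV (M.obsRV ε ↑B) := by
  classical
  haveI : Fintype ↥(obsEdges (E := E) B) := FinsetCoe.fintype _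
  set k : M.Ω → (↥(obsEdges (E := E) B) → Y') × (↥B → Option X) :=
    fun ω => (fun e => M.Yobs e ω, fun v => M.ξ ε v ω) with hk
  have hkd : DiscRV k := by
    refine DiscRV.of_finite k fun f => ?_
    have : k ⁻¹' {f} = (⋂ e : ↥(obsEdges (E := E) B), {ω | M.Yobs e.val ω = f.1 e}) ∩
        ⋂ v : ↥B, {ω | M.ξ ε v.val ω = f.2 v} := by
      ext ω
      simp only [Set.mem_preimage, Set.mem_singleton_iff, Set.mem_inter_iff, Set.mem_iInter,
        Set.mem_setOf_eq, hk, Prod.ext_iff, funext_iff]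
    rw [this]
    exact (MeasurableSet.iInter fun e => M.measYset e.val (f.1 e)).inter
      (MeasurableSet.iInter fun v => M.measξset ε v.val (f.2 v))
  have heq : M.obsRV ε ↑B = fun ω =>
      (fun f : (↥(obsEdges (E := E) B) → Y') × (↥B → Option X) =>
        ((fun e : V × V => if h : e ∈ obsEdges (E := E) B then some (f.1 ⟨e, h⟩) else none),
         (fun v : V => if h : v ∈ B then some (f.2 ⟨v, h⟩) else none))) (k ω) := by
    funext ω
    refine Prod.ext ?_ ?_
    · funext e
      simp only [obsRV, hk]
      by_cases h : e ∈ E ∧ e.1 ∈ (↑B : Set V) ∧ e.2 ∈ (↑B : Set V)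
      · rw [if_pos h, dif_pos (mem_obsEdges.mpr (by simpa using h))]
      · rw [if_neg h, dif_neg (fun hc => h (by simpa using mem_obsEdges.mp hc))]
    · funext v
      simp only [obsRV, hk]
      by_cases h : v ∈ (↑B : Set V)
      · rw [if_pos h, dif_pos (by simpa using h)]
      · rw [if_neg h, dif_neg (by simpa using h)]
  rw [heq]
  exact hkd.comp' (fun f : (↥(obsEdges (E := E) B) → Y') × (↥B → Option X) =>
    ((fun e : V × V => if h : e ∈ obsEdges (E := E) B then some (f.1 ⟨e, h⟩) else none),
     (fun v : V => if h : v ∈ B then some (f.2 ⟨v, h⟩) else none)))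

lemma discθ (v : V) : DiscRV (M.θ v) :=
  ⟨Set.toFinite _, fun x => M.measθset v x⟩

lemma discY (e : V × V) (y : Y') : DiscRV (M.Yobs e) :=
  ⟨Set.toFinite _, fun x => M.measYset e x⟩

def extn (s : Finset V) (σ : ↥s → X) : V → X :=
  fun v => if h : v ∈ s then σ ⟨v, h⟩ else Classical.arbitrary X
def βof (b : V → Option X) : V → X := fun v => (b v).getD (Classical.arbitrary X)
def yof (d : (V × V → Option Y') × (V → Option (Option X))) : V × V → Y' :=
  fun e => (d.1 e).getD (Classical.arbitrary Y')
def zof (d : (V × V → Option Y') × (V → Option (Option X))) : V → Option X :=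
  fun v => (d.2 v).getD none
def T1of (B : Finset V) (d : (V × V → Option Y') × (V → Option (Option X))) : Finset V :=
  {v ∈ B | (zof d v).isSome}
def xof (d : (V × V → Option Y') × (V → Option (Option X))) : V → X :=
  fun v => (zof d v).getD (Classical.arbitrary X)

lemma obsRV_fst (ε : ℝ) (S : Set V) (ω : M.Ω) (e : V × V) :
    (M.obsRV ε S ω).1 e = if e ∈ E ∧ e.1 ∈ S ∧ e.2 ∈ S then some (M.Yobs e ω) else none := by
  simp only [obsRV]
  try (split_ifs <;> rfl)

lemma obsRV_snd (ε : ℝ) (S : Set V) (ω : M.Ω) (v : V) :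
    (M.obsRV ε S ω).2 v = if v ∈ S then some (M.ξ ε v ω) else none := by
  simp only [obsRV]
  try (split_ifs <;> rfl)

lemma evB_char {W : Set V} (hW : W.Finite) {b : V → Option X}
    (hb : b ∈ Set.range (M.thetaOn W)) :
    {ω | M.thetaOn W ω = b} = {ω | ∀ v ∈ hW.toFinset, M.θ v ω = βof b v} := by
  obtain ⟨ω₀, hω₀⟩ := hb
  have hbv : ∀ v, b v = if v ∈ W then some (M.θ v ω₀) else none := fun v =>
    (congrFun hω₀ v).symm
  ext ω
  simp only [Set.mem_setOf_eq]
  constructor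
  · intro h v hv
    rw [Set.Finite.mem_toFinset] at hv
    have := congrFun h v
    rw [thetaOn, if_pos hv] at this
    rw [βof, ← this]
    rfl
  · intro h
    funext v
    by_cases hv : v ∈ W
    · rw [thetaOn, if_pos hv, h v (hW.mem_toFinset.mpr hv), hbv v, if_pos hv, βof, hbv v,
        if_pos hv]
      rfl
    · rw [thetaOn, if_neg hv, hbv v, if_neg hv]

lemma evD_char (ε : ℝ) (B : Finset V) {d : (V × V → Option Y') × (V → Option (Option X))}
    (hd : d ∈ Set.range (M.obsRV ε ↑B)) :
    {ω | M.obsRV ε ↑B ω = d}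
      = {ω | (∀ e ∈ obsEdges (E := E) B, M.Yobs e ω = yof d e)
          ∧ (∀ v ∈ T1of B d, M.θ v ω = xof d v)
          ∧ (∀ v ∈ T1of B d, M.U v ω ≤ ε)
          ∧ (∀ v ∈ B \ T1of B d, ¬ M.U v ω ≤ ε)} := by
  obtain ⟨ω₀, hω₀⟩ := hd
  have h1 : ∀ e, d.1 e = if e ∈ E ∧ e.1 ∈ (↑B : Set V) ∧ e.2 ∈ (↑B : Set V)
      then some (M.Yobs e ω₀) else none := by
    intro e
    rw [← hω₀, obsRV_fst]
    try (split_ifs <;> rfl)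
  have h2 : ∀ v, d.2 v = if v ∈ (↑B : Set V) then some (M.ξ ε v ω₀) else none := by
    intro v
    rw [← hω₀, obsRV_snd]
    try (split_ifs <;> rfl)
  have hz : ∀ v ∈ B, zof d v = M.ξ ε v ω₀ := by
    intro v hv
    rw [zof, h2, if_pos (by simpa using hv)]
    rfl
  have hy : ∀ e ∈ obsEdges (E := E) B, d.1 e = some (yof d e) := by
    intro e he
    obtain ⟨h1', h2', h3'⟩ := mem_obsEdges.mp he
    rw [yof, h1, if_pos ⟨h1', by simpa using h2', by simpa using h3'⟩]
    rfl
  have hT1 : ∀ v, v ∈ T1of B d ↔ v ∈ B ∧ M.U v ω₀ ≤ ε := by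
    intro v
    rw [T1of, Finset.mem_filter]
    constructor
    · rintro ⟨hv, hs⟩
      rw [hz v hv, ξ] at hs
      by_cases h : M.U v ω₀ ≤ ε
      · exact ⟨hv, h⟩
      · rw [if_neg h] at hs; simp at hs
    · rintro ⟨hv, h⟩
      exact ⟨hv, by rw [hz v hv, ξ, if_pos h]; rfl⟩
  ext ω
  simp only [Set.mem_setOf_eq]
  constructor
  · intro h
    have g1 : ∀ e, (if e ∈ E ∧ e.1 ∈ (↑B : Set V) ∧ e.2 ∈ (↑B : Set V)
        then some (M.Yobs e ω) else none) = d.1 e := by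
      intro e
      rw [← h, obsRV_fst]
      try (split_ifs <;> rfl)
    have g2 : ∀ v, (if v ∈ (↑B : Set V) then some (M.ξ ε v ω) else none) = d.2 v := by
      intro v
      rw [← h, obsRV_snd]
      try (split_ifs <;> rfl)
    have gz : ∀ v ∈ B, M.ξ ε v ω = zof d v := by
      intro v hv
      rw [zof, ← g2, if_pos (by simpa using hv)]
      rfl
    refine ⟨?_, ?_, ?_, ?_⟩
    · intro e he
      obtain ⟨h1', h2', h3'⟩ := mem_obsEdges.mp he
      have := g1 e
      rw [if_pos ⟨h1', by simpa using h2', by simpa using h3'⟩, hy e he] at this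
      exact Option.some_injective _ this
    · intro v hv
      obtain ⟨hvB, hvs⟩ := Finset.mem_filter.mp hv
      have := gz v hvB
      rw [ξ] at this
      by_cases hU : M.U v ω ≤ ε
      · rw [if_pos hU] at this
        rw [xof, ← this]
        rfl
      · rw [if_neg hU] at this
        rw [← this] at hvs
        simp at hvs
    · intro v hv
      obtain ⟨hvB, hvs⟩ := Finset.mem_filter.mp hv
      have := gz v hvB
      rw [ξ] at this
      by_cases hU : M.U v ω ≤ ε
      · exact hU
      · rw [if_neg hU] at this
        rw [← this] at hvs
        simp at hvs
    · intro v hv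
      obtain ⟨hvB, hvn⟩ := Finset.mem_sdiff.mp hv
      intro hU
      apply hvn
      rw [T1of, Finset.mem_filter]
      refine ⟨hvB, ?_⟩
      rw [← gz v hvB, ξ, if_pos hU]
      rfl
  · rintro ⟨hY, hθ, hU1, hU2⟩
    refine Prod.ext ?_ ?_
    · funext e
      rw [obsRV_fst]
      by_cases hc : e ∈ E ∧ e.1 ∈ (↑B : Set V) ∧ e.2 ∈ (↑B : Set V)
      · have he : e ∈ obsEdges (E := E) B :=
          mem_obsEdges.mpr ⟨hc.1, by simpa using hc.2.1, by simpa using hc.2.2⟩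
        rw [if_pos hc, hY e he, hy e he]
      · rw [if_neg hc, h1, if_neg hc]
    · funext v
      rw [obsRV_snd]
      by_cases hv : v ∈ B
      · rw [if_pos (by simpa using hv), h2, if_pos (by simpa using hv), ← hz v hv]
        congr 1
        by_cases hT : v ∈ T1of B d
        · have hs : (zof d v).isSome := (Finset.mem_filter.mp hT).2
          obtain ⟨xv, hxv⟩ := Option.isSome_iff_exists.mp hs
          have hxof : xof d v = xv := by rw [xof, hxv]; rfl
          rw [ξ, if_pos (hU1 v hT), hθ v hT, hxof, hxv]
        · have : v ∈ B \ T1of B d := Finset.mem_sdiff.mpr ⟨hv, hT⟩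
          have hn : ¬ (zof d v).isSome := fun hs =>
            hT (Finset.mem_filter.mpr ⟨hv, hs⟩)
          rw [Option.not_isSome_iff_eq_none] at hn
          rw [ξ, if_neg (hU2 v this), hn]
      · rw [if_neg (by simpa using hv), h2, if_neg (by simpa using hv)]

lemma measθpins (W : Finset V) (σ : V → X) :
    MeasurableSet {ω | ∀ v ∈ W, M.θ v ω = σ v} := by
  have : {ω | ∀ v ∈ W, M.θ v ω = σ v} = ⋂ v ∈ (W : Set V), {ω | M.θ v ω = σ v} := by
    ext ω; simp
  rw [this]
  exact MeasurableSet.biInter W.countable_toSet fun v _ => M.measθset v (σ v)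

lemma measYpins (F : Finset (V × V)) (y : V × V → Y') :
    MeasurableSet {ω | ∀ e ∈ F, M.Yobs e ω = y e} := by
  have : {ω | ∀ e ∈ F, M.Yobs e ω = y e} = ⋂ e ∈ (F : Set (V × V)), {ω | M.Yobs e ω = y e} := by
    ext ω; simp
  rw [this]
  exact MeasurableSet.biInter F.countable_toSet fun e _ => M.measYset e (y e)

lemma measU1pins (T : Finset V) (ε : ℝ) :
    MeasurableSet {ω | ∀ v ∈ T, M.U v ω ≤ ε} := by
  have : {ω | ∀ v ∈ T, M.U v ω ≤ ε} = ⋂ v ∈ (T : Set V), {ω | M.U v ω ≤ ε} := by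
    ext ω; simp
  rw [this]
  exact MeasurableSet.biInter T.countable_toSet fun v _ => M.measUset v ε

lemma measU2pins (T : Finset V) (ε : ℝ) :
    MeasurableSet {ω | ∀ v ∈ T, ¬ M.U v ω ≤ ε} := by
  have : {ω | ∀ v ∈ T, ¬ M.U v ω ≤ ε} = ⋂ v ∈ (T : Set V), {ω | M.U v ω ≤ ε}ᶜ := by
    ext ω; simp
  rw [this]
  exact MeasurableSet.biInter T.countable_toSet fun v _ => (M.measUset v ε).compl

lemma measPins (W : Finset V) (σ : V → X) (F : Finset (V × V)) (y : V × V → Y')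
    (T₁ T₂ : Finset V) (ε : ℝ) :
    MeasurableSet {ω | (∀ v ∈ W, M.θ v ω = σ v) ∧ (∀ e ∈ F, M.Yobs e ω = y e)
      ∧ (∀ v ∈ T₁, M.U v ω ≤ ε) ∧ ∀ v ∈ T₂, ¬ M.U v ω ≤ ε} := by
  have : {ω | (∀ v ∈ W, M.θ v ω = σ v) ∧ (∀ e ∈ F, M.Yobs e ω = y e)
      ∧ (∀ v ∈ T₁, M.U v ω ≤ ε) ∧ ∀ v ∈ T₂, ¬ M.U v ω ≤ ε}
      = {ω | ∀ v ∈ W, M.θ v ω = σ v} ∩ ({ω | ∀ e ∈ F, M.Yobs e ω = y e}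
        ∩ ({ω | ∀ v ∈ T₁, M.U v ω ≤ ε} ∩ {ω | ∀ v ∈ T₂, ¬ M.U v ω ≤ ε})) := by
    ext ω; simp only [Set.mem_setOf_eq, Set.mem_inter_iff]
  rw [this]
  exact (M.measθpins W σ).inter ((M.measYpins F y).inter
    ((M.measU1pins T₁ ε).inter (M.measU2pins T₂ ε)))

lemma peelU {ε : ℝ} (hε : ε ∈ Set.Icc (0:ℝ) 1) (W : Finset V) (σ : V → X)
    (F : Finset (V × V)) (y : V × V → Y') (T₂ : Finset V) :
    ∀ T₁ : Finset V, Disjoint T₁ T₂ →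
    (M.P {ω | (∀ v ∈ W, M.θ v ω = σ v) ∧ (∀ e ∈ F, M.Yobs e ω = y e)
        ∧ (∀ v ∈ T₁, M.U v ω ≤ ε) ∧ ∀ v ∈ T₂, ¬ M.U v ω ≤ ε}).toReal
      = ε ^ T₁.card * (1 - ε) ^ T₂.card
        * (M.P {ω | (∀ v ∈ W, M.θ v ω = σ v) ∧ ∀ e ∈ F, M.Yobs e ω = y e}).toReal := by
  classical
  induction T₂ using Finset.induction_on with
  | empty =>
    intro T₁ _
    simp only [Finset.notMem_empty, false_implies, implies_true, and_true, Finset.card_empty,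
      pow_zero, mul_one]
    have hset : {ω | (∀ v ∈ W, M.θ v ω = σ v) ∧ (∀ e ∈ F, M.Yobs e ω = y e)
        ∧ (∀ v ∈ T₁, M.U v ω ≤ ε)}
        = {ω | (∀ v ∈ T₁, M.U v ω ≤ ε) ∧ (∀ v ∈ W, M.θ v ω = σ v)
            ∧ ∀ e ∈ F, M.Yobs e ω = y e} := by
      ext ω; simp only [Set.mem_setOf_eq]; tauto
    rw [hset, M.lawU T₁ (fun _ => ε) (fun _ => hε) W F σ y, Finset.prod_const]
  | @insert w s hw ih =>
    intro T₁ hdisj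
    rw [Finset.disjoint_insert_right] at hdisj
    obtain ⟨hw1, hds⟩ := hdisj
    set Ev1 := {ω | (∀ v ∈ W, M.θ v ω = σ v) ∧ (∀ e ∈ F, M.Yobs e ω = y e)
        ∧ (∀ v ∈ T₁, M.U v ω ≤ ε) ∧ ∀ v ∈ s, ¬ M.U v ω ≤ ε} with hEv1
    set Ev2 := {ω | (∀ v ∈ W, M.θ v ω = σ v) ∧ (∀ e ∈ F, M.Yobs e ω = y e)
        ∧ (∀ v ∈ insert w T₁, M.U v ω ≤ ε) ∧ ∀ v ∈ s, ¬ M.U v ω ≤ ε} with hEv2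
    have hsub : Ev2 ⊆ Ev1 := by
      rintro ω ⟨a1, a2, a3, a4⟩
      exact ⟨a1, a2, fun v hv => a3 v (Finset.mem_insert_of_mem hv), a4⟩
    have hEq : {ω | (∀ v ∈ W, M.θ v ω = σ v) ∧ (∀ e ∈ F, M.Yobs e ω = y e)
        ∧ (∀ v ∈ T₁, M.U v ω ≤ ε) ∧ ∀ v ∈ insert w s, ¬ M.U v ω ≤ ε} = Ev1 \ Ev2 := by
      ext ω
      simp only [hEv1, hEv2, Set.mem_diff, Set.mem_setOf_eq, Finset.forall_mem_insert]
      constructor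
      · rintro ⟨a1, a2, a3, a4, a5⟩
        exact ⟨⟨a1, a2, a3, a5⟩, fun hc => a4 hc.2.2.1.1⟩
      · rintro ⟨⟨a1, a2, a3, a5⟩, hn⟩
        refine ⟨a1, a2, a3, fun hc => hn ⟨a1, a2, ⟨hc, a3⟩, a5⟩, a5⟩
    rw [hEq]
    haveI := M.probP
    have hm2 : MeasurableSet Ev2 := M.measPins W σ F y (insert w T₁) s ε
    have hd := measure_diff hsub hm2.nullMeasurableSet (measure_ne_top M.P _)
    rw [hd, ENNReal.toReal_sub_of_le (measure_mono hsub) (measure_ne_top M.P _)]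
    rw [ih T₁ hds, ih (insert w T₁) (Finset.disjoint_insert_left.mpr ⟨hw, hds⟩)]
    rw [Finset.card_insert_of_notMem hw1, Finset.card_insert_of_notMem hw]
    ring

/-- the labels restricted to a finset, as a finitely-valued RV -/
def thetaRes (B : Finset V) : M.Ω → (↥B → X) := fun ω v => M.θ v.val ω

lemma disc_thetaRes (B : Finset V) : DiscRV (M.thetaRes B) := by
  classical
  refine DiscRV.of_finite _ fun f => ?_
  have : M.thetaRes B ⁻¹' {f} = ⋂ v : ↥B, {ω | M.θ v.val ω = f v} := by
    ext ω
    simp only [Set.mem_preimage, Set.mem_singleton_iff, Set.mem_iInter, Set.mem_setOf_eq,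
      thetaRes, funext_iff]
  rw [this]
  exact MeasurableSet.iInter fun v => M.measθset v.val (f v)

lemma thetaRes_eq_iff (B : Finset V) (σ : ↥B → X) (ω : M.Ω) :
    M.thetaRes B ω = σ ↔ ∀ v ∈ B, M.θ v ω = extn B σ v := by
  constructor
  · intro h v hv
    rw [extn, dif_pos hv]
    exact congrFun h ⟨v, hv⟩
  · intro h
    funext v
    have := h v.val v.2
    rw [extn, dif_pos v.2] at this
    exact this

lemma bdry_finite (S : Finset V) : (vBoundary (graphOf E) ↑S).Finite :=
  S.finite_toSet.subset fun v hv => hv.1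

/-- STEP A + B + C : full expansion of the joint probability over configurations on B -/
lemma core1 {ε : ℝ} (hε : ε ∈ Set.Icc (0:ℝ) 1) (S B : Finset V) (hSB : S ⊆ B)
    (u : V) (hu : u ∈ S)
    (a : X) (b : V → Option X) (d : (V × V → Option Y') × (V → Option (Option X)))
    (hb : b ∈ Set.range (M.thetaOn (vBoundary (graphOf E) ↑S)))
    (hd : d ∈ Set.range (M.obsRV ε ↑B)) :
    (M.P ({ω | M.θ u ω = a} ∩ {ω | M.thetaOn (vBoundary (graphOf E) ↑S) ω = b}
        ∩ {ω | M.obsRV ε ↑B ω = d})).toReal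
      = ∑ σ : ↥B → X,
          (if (extn B σ u = a ∧ (∀ v ∈ (bdry_finite (E := E) S).toFinset,
                extn B σ v = βof b v)
              ∧ ∀ v ∈ T1of B d, extn B σ v = xof d v) then (1:ℝ) else 0)
            * (ε ^ (T1of B d).card * (1 - ε) ^ (B \ T1of B d).card
              * (((Fintype.card X : ℝ))⁻¹ ^ B.card
                * ∏ e ∈ obsEdges (E := E) B, Q (extn B σ e.1) (extn B σ e.2) (yof d e))) := by
  classical
  haveI := M.probP
  rw [evB_char M (bdry_finite S) hb, evD_char M ε B hd]
  set T₁ := T1of B d with hT₁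
  set K := {ω | M.θ u ω = a} ∩ {ω | ∀ v ∈ (bdry_finite (E := E) S).toFinset, M.θ v ω = βof b v}
      ∩ {ω | (∀ e ∈ obsEdges (E := E) B, M.Yobs e ω = yof d e)
          ∧ (∀ v ∈ T₁, M.θ v ω = xof d v)
          ∧ (∀ v ∈ T₁, M.U v ω ≤ ε)
          ∧ (∀ v ∈ B \ T₁, ¬ M.U v ω ≤ ε)} with hK
  have hKmeas : MeasurableSet K := by
    refine (((M.measθset u a).inter (M.measθpins _ _)).inter ?_)
    have : {ω | (∀ e ∈ obsEdges (E := E) B, M.Yobs e ω = yof d e)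
          ∧ (∀ v ∈ T₁, M.θ v ω = xof d v)
          ∧ (∀ v ∈ T₁, M.U v ω ≤ ε)
          ∧ (∀ v ∈ B \ T₁, ¬ M.U v ω ≤ ε)}
        = {ω | ∀ e ∈ obsEdges (E := E) B, M.Yobs e ω = yof d e}
          ∩ ({ω | ∀ v ∈ T₁, M.θ v ω = xof d v}
            ∩ ({ω | ∀ v ∈ T₁, M.U v ω ≤ ε} ∩ {ω | ∀ v ∈ B \ T₁, ¬ M.U v ω ≤ ε})) := by
      ext ω; simp only [Set.mem_setOf_eq, Set.mem_inter_iff]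
    rw [this]
    exact (M.measYpins _ _).inter ((M.measθpins _ _).inter
      ((M.measU1pins _ _).inter (M.measU2pins _ _)))
  have hpart := partition_inter M.P (M.disc_thetaRes B) (R := Finset.univ)
    (by intro x _; simp) hKmeas Set.univ
  simp only [Set.preimage_univ, Set.inter_univ, Set.mem_univ, Finset.filter_true] at hpart
  rw [hpart]
  refine Finset.sum_congr rfl fun σ _ => ?_
  by_cases hind : extn B σ u = a ∧ (∀ v ∈ (bdry_finite (E := E) S).toFinset,
      extn B σ v = βof b v) ∧ ∀ v ∈ T₁, extn B σ v = xof d v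
  · rw [if_pos hind, one_mul]
    have hset : K ∩ M.thetaRes B ⁻¹' {σ}
        = {ω | (∀ v ∈ B, M.θ v ω = extn B σ v) ∧ (∀ e ∈ obsEdges (E := E) B, M.Yobs e ω = yof d e)
            ∧ (∀ v ∈ T₁, M.U v ω ≤ ε) ∧ ∀ v ∈ B \ T₁, ¬ M.U v ω ≤ ε} := by
      ext ω
      simp only [hK, Set.mem_inter_iff, Set.mem_setOf_eq, Set.mem_preimage,
        Set.mem_singleton_iff, thetaRes_eq_iff]
      constructor
      · rintro ⟨⟨⟨-, -⟩, hY, -, hU1, hU2⟩, hres⟩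
        exact ⟨hres, hY, hU1, hU2⟩
      · rintro ⟨hres, hY, hU1, hU2⟩
        refine ⟨⟨⟨?_, ?_⟩, hY, ?_, hU1, hU2⟩, hres⟩
        · rw [hres u (hSB hu)]; exact hind.1
        · intro v hv
          have hvS : v ∈ S := by
            have := (Set.Finite.mem_toFinset _).mp hv
            exact this.1
          rw [hres v (hSB hvS)]
          exact hind.2.1 v hv
        · intro v hv
          rw [hres v (Finset.mem_filter.mp hv).1]
          exact hind.2.2 v hv
    rw [hset]
    have hdisj : Disjoint T₁ (B \ T₁) := Finset.disjoint_sdiff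
    rw [peelU M hε B (extn B σ) (obsEdges (E := E) B) (yof d) (B \ T₁) T₁ hdisj]
    have hlaw := M.lawθY B (obsEdges (E := E) B)
      (fun e he => by
        obtain ⟨h1, h2, h3⟩ := mem_obsEdges.mp he
        exact ⟨h1, h2, h3⟩) (extn B σ) (yof d)
    rw [hlaw]
  · rw [if_neg hind, zero_mul]
    have hset : K ∩ M.thetaRes B ⁻¹' {σ} = ∅ := by
      ext ω
      simp only [hK, Set.mem_inter_iff, Set.mem_setOf_eq, Set.mem_preimage,
        Set.mem_singleton_iff, Set.mem_empty_iff_false, iff_false, thetaRes_eq_iff]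
      rintro ⟨⟨⟨ha, hβ⟩, -, hθx, -, -⟩, hres⟩
      apply hind
      refine ⟨?_, ?_, ?_⟩
      · rw [← hres u (hSB hu)]; exact ha
      · intro v hv
        have hvS : v ∈ S := ((Set.Finite.mem_toFinset _).mp hv).1
        rw [← hres v (hSB hvS)]
        exact hβ v hv
      · intro v hv
        rw [← hres v (Finset.mem_filter.mp hv).1]
        exact hθx v hv
    rw [hset]
    simp

section FG
variable (Q E)

/-- inside factor (sum over labelings of S) -/
def FS (S : Finset V) (u : V) (a : X) (b : V → Option X)
    (d : (V × V → Option Y') × (V → Option (Option X))) : ℝ :=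
  ∑ σ₁ : ↥S → X,
    (if (extn S σ₁ u = a ∧ (∀ v ∈ (bdry_finite (E := E) S).toFinset,
          extn (X := X) S σ₁ v = βof b v)
        ∧ ∀ v ∈ {v ∈ S | (zof d v).isSome}, extn S σ₁ v = xof d v) then (1:ℝ) else 0)
      * ∏ e ∈ obsEdges (E := E) S, Q (extn S σ₁ e.1) (extn S σ₁ e.2) (yof d e)

/-- outside factor (sum over labelings of B \ S) -/
def GS (S B : Finset V) (b : V → Option X)
    (d : (V × V → Option Y') × (V → Option (Option X))) : ℝ :=
  ∑ σ₂ : ↥(B \ S) → X,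
    (if (∀ v ∈ T1of B d \ S, extn (B \ S) σ₂ v = xof d v) then (1:ℝ) else 0)
      * ∏ e ∈ obsEdges (E := E) B \ obsEdges (E := E) S,
          Q (if e.1 ∈ S then βof b e.1 else extn (B \ S) σ₂ e.1)
            (if e.2 ∈ S then βof b e.2 else extn (B \ S) σ₂ e.2) (yof d e)

def Ffun (S : Finset V) (u : V) (a : X) (b : V → Option X)
    (d : (V × V → Option Y') × (V → Option (Option X))) : ℝ :=
  ((Fintype.card X : ℝ))⁻¹ ^ S.card * FS Q E S u a b d

def Gfun (ε : ℝ) (S B : Finset V) (b : V → Option X)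
    (d : (V × V → Option Y') × (V → Option (Option X))) : ℝ :=
  ε ^ (T1of B d).card * (1 - ε) ^ (B \ T1of B d).card
    * (((Fintype.card X : ℝ))⁻¹ ^ (B \ S).card * GS Q E S B b d)
end FG

def joinFun (S B : Finset V) (hSB : S ⊆ B) (p : (↥S → X) × (↥(B \ S) → X)) : ↥B → X :=
  fun v => if h : v.val ∈ S then p.1 ⟨v.val, h⟩
    else p.2 ⟨v.val, Finset.mem_sdiff.mpr ⟨v.2, h⟩⟩

lemma joinFun_bij (S B : Finset V) (hSB : S ⊆ B) :
    Function.Bijective (joinFun (X := X) S B hSB) := by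
  classical
  rw [Function.bijective_iff_has_inverse]
  refine ⟨fun σ => (fun v => σ ⟨v.val, hSB v.2⟩,
    fun v => σ ⟨v.val, (Finset.mem_sdiff.mp v.2).1⟩), ?_, ?_⟩
  · rintro ⟨p₁, p₂⟩
    refine Prod.ext ?_ ?_
    · funext v
      show joinFun S B hSB (p₁, p₂) ⟨v.val, hSB v.2⟩ = p₁ v
      rw [joinFun]
      rw [dif_pos v.2]
    · funext v
      show joinFun S B hSB (p₁, p₂) ⟨v.val, (Finset.mem_sdiff.mp v.2).1⟩ = p₂ v
      rw [joinFun]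
      rw [dif_neg (Finset.mem_sdiff.mp v.2).2]
  · intro σ
    funext v
    rw [joinFun]
    by_cases h : v.val ∈ S
    · rw [dif_pos h]
    · rw [dif_neg h]

lemma extn_join_S {S B : Finset V} (hSB : S ⊆ B) (p : (↥S → X) × (↥(B \ S) → X))
    {v : V} (hv : v ∈ S) :
    extn B (joinFun S B hSB p) v = extn S p.1 v := by
  rw [extn, extn, dif_pos (hSB hv), dif_pos hv, joinFun, dif_pos hv]

lemma extn_join_O {S B : Finset V} (hSB : S ⊆ B) (p : (↥S → X) × (↥(B \ S) → X))
    {v : V} (hv : v ∈ B) (hv2 : v ∉ S) :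
    extn B (joinFun S B hSB p) v = extn (B \ S) p.2 v := by
  rw [extn, extn, dif_pos hv, dif_pos (Finset.mem_sdiff.mpr ⟨hv, hv2⟩), joinFun, dif_neg hv2]

lemma mem_bdry_of_extra_edge (hloop : ∀ e ∈ E, e.1 ≠ e.2) {S B : Finset V} {e : V × V}
    (he : e ∈ obsEdges (E := E) B) (hne : e ∉ obsEdges (E := E) S) :
    (e.1 ∈ S → e.1 ∈ (bdry_finite (E := E) S).toFinset)
      ∧ (e.2 ∈ S → e.2 ∈ (bdry_finite (E := E) S).toFinset) := by
  obtain ⟨heE, h1B, h2B⟩ := mem_obsEdges.mp he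
  have hnot : ¬ (e.1 ∈ S ∧ e.2 ∈ S) := fun hc =>
    hne (mem_obsEdges.mpr ⟨heE, hc.1, hc.2⟩)
  have hadj : (graphOf E).Adj e.1 e.2 := by
    rw [graphOf, SimpleGraph.fromRel_adj]
    exact ⟨hloop e heE, Or.inl (by rw [Prod.mk.eta]; exact heE)⟩
  constructor
  · intro h1
    have h2 : e.2 ∉ S := fun hc => hnot ⟨h1, hc⟩
    rw [Set.Finite.mem_toFinset]
    exact ⟨by simpa using h1, e.2, by simpa using h2, hadj⟩
  · intro h2
    have h1 : e.1 ∉ S := fun hc => hnot ⟨hc, h2⟩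
    rw [Set.Finite.mem_toFinset]
    exact ⟨by simpa using h2, e.1, by simpa using h1, hadj.symm⟩

/-- The Fubini factorization of the configuration sum. -/
lemma fubini_key (hloop : ∀ e ∈ E, e.1 ≠ e.2) (S B : Finset V) (hSB : S ⊆ B)
    (u : V) (hu : u ∈ S)
    (a : X) (b : V → Option X) (d : (V × V → Option Y') × (V → Option (Option X))) :
    ∑ σ : ↥B → X,
      (if (extn B σ u = a ∧ (∀ v ∈ (bdry_finite (E := E) S).toFinset,
            extn (X := X) B σ v = βof b v)
          ∧ ∀ v ∈ T1of B d, extn B σ v = xof d v) then (1:ℝ) else 0)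
        * ∏ e ∈ obsEdges (E := E) B, Q (extn B σ e.1) (extn B σ e.2) (yof d e)
      = FS Q E S u a b d * GS Q E S B b d := by
  classical
  rw [FS, GS, Finset.sum_mul_sum]
  rw [← Fintype.sum_prod_type']
  refine (Fintype.sum_bijective (joinFun (X := X) S B hSB) (joinFun_bij S B hSB) _ _
    fun p => ?_).symm
  obtain ⟨σ₁, σ₂⟩ := p
  symm
  -- membership facts
  have hobsSB : obsEdges (E := E) S ⊆ obsEdges (E := E) B := by
    intro e he
    obtain ⟨h1, h2, h3⟩ := mem_obsEdges.mp he
    exact mem_obsEdges.mpr ⟨h1, hSB h2, hSB h3⟩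
  have hindiff : (extn B (joinFun S B hSB (σ₁, σ₂)) u = a
        ∧ (∀ v ∈ (bdry_finite (E := E) S).toFinset,
            extn B (joinFun S B hSB (σ₁, σ₂)) v = βof b v)
        ∧ ∀ v ∈ T1of B d, extn B (joinFun S B hSB (σ₁, σ₂)) v = xof d v)
      ↔ ((extn S σ₁ u = a ∧ (∀ v ∈ (bdry_finite (E := E) S).toFinset,
            extn (X := X) S σ₁ v = βof b v)
          ∧ ∀ v ∈ {v ∈ S | (zof d v).isSome}, extn S σ₁ v = xof d v)
        ∧ ∀ v ∈ T1of B d \ S, extn (B \ S) σ₂ v = xof d v) := by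
    constructor
    · rintro ⟨h1, h2, h3⟩
      refine ⟨⟨?_, ?_, ?_⟩, ?_⟩
      · rw [← extn_join_S hSB (σ₁, σ₂) hu]; exact h1
      · intro v hv
        have hvS : v ∈ S := ((Set.Finite.mem_toFinset _).mp hv).1
        rw [← extn_join_S hSB (σ₁, σ₂) hvS]
        exact h2 v hv
      · intro v hv
        obtain ⟨hvS, hvs⟩ := Finset.mem_filter.mp hv
        rw [← extn_join_S hSB (σ₁, σ₂) hvS]
        exact h3 v (Finset.mem_filter.mpr ⟨hSB hvS, hvs⟩)
      · intro v hv
        obtain ⟨hvT, hvS⟩ := Finset.mem_sdiff.mp hv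
        have hvB : v ∈ B := (Finset.mem_filter.mp hvT).1
        rw [← extn_join_O hSB (σ₁, σ₂) hvB hvS]
        exact h3 v hvT
    · rintro ⟨⟨h1, h2, h3⟩, h4⟩
      refine ⟨?_, ?_, ?_⟩
      · rw [extn_join_S hSB (σ₁, σ₂) hu]; exact h1
      · intro v hv
        have hvS : v ∈ S := ((Set.Finite.mem_toFinset _).mp hv).1
        rw [extn_join_S hSB (σ₁, σ₂) hvS]
        exact h2 v hv
      · intro v hv
        obtain ⟨hvB, hvs⟩ := Finset.mem_filter.mp hv
        by_cases hvS : v ∈ S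
        · rw [extn_join_S hSB (σ₁, σ₂) hvS]
          exact h3 v (Finset.mem_filter.mpr ⟨hvS, hvs⟩)
        · rw [extn_join_O hSB (σ₁, σ₂) hvB hvS]
          exact h4 v (Finset.mem_sdiff.mpr ⟨Finset.mem_filter.mpr ⟨hvB, hvs⟩, hvS⟩)
  by_cases hind : (extn S σ₁ u = a ∧ (∀ v ∈ (bdry_finite (E := E) S).toFinset,
        extn (X := X) S σ₁ v = βof b v)
      ∧ ∀ v ∈ {v ∈ S | (zof d v).isSome}, extn S σ₁ v = xof d v)
      ∧ ∀ v ∈ T1of B d \ S, extn (B \ S) σ₂ v = xof d v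
  · rw [if_pos (hindiff.mpr hind), if_pos hind.1, if_pos hind.2, one_mul, one_mul, one_mul]
    rw [← Finset.prod_sdiff hobsSB]
    rw [mul_comm (∏ e ∈ obsEdges (E := E) B \ obsEdges (E := E) S, _) _]
    congr 1
    · refine Finset.prod_congr rfl fun e he => ?_
      obtain ⟨h1, h2, h3⟩ := mem_obsEdges.mp he
      rw [extn_join_S hSB (σ₁, σ₂) h2, extn_join_S hSB (σ₁, σ₂) h3]
    · refine Finset.prod_congr rfl fun e he => ?_
      obtain ⟨heB, heS⟩ := Finset.mem_sdiff.mp he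
      obtain ⟨heE, h1B, h2B⟩ := mem_obsEdges.mp heB
      have hbd := mem_bdry_of_extra_edge hloop heB heS
      congr 1
      · by_cases h1S : e.1 ∈ S
        · rw [if_pos h1S, extn_join_S hSB (σ₁, σ₂) h1S]
          exact hind.1.2.1 e.1 (hbd.1 h1S)
        · rw [if_neg h1S, extn_join_O hSB (σ₁, σ₂) h1B h1S]
      · by_cases h2S : e.2 ∈ S
        · rw [if_pos h2S, extn_join_S hSB (σ₁, σ₂) h2S]
          exact hind.1.2.1 e.2 (hbd.2 h2S)
        · rw [if_neg h2S, extn_join_O hSB (σ₁, σ₂) h2B h2S]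
  · rw [if_neg (fun hc => hind (hindiff.mp hc))]
    rw [not_and_or] at hind
    rcases hind with h | h
    · rw [if_neg h]
      ring
    · rw [if_neg h]
      ring

end Model
namespace Model
variable {X Y' V : Type*} [Fintype X] [Fintype Y'] [Nonempty X] [Nonempty Y']
  {Q : X → X → Y' → ℝ} {E : Set (V × V)} (M : Model X Y' Q E)

lemma sum_helper {ι : Type*} [Fintype ι] (f g : ι → ℝ) (c1 c2 : ℝ) :
    (∑ i : ι, f i * (c1 * (c2 * g i))) = (c1 * c2) * ∑ i : ι, f i * g i := by
  rw [Finset.mul_sum]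
  exact Finset.sum_congr rfl fun i _ => by ring

/-- CORE factorization: the joint probability factorizes into inside and outside parts. -/
lemma coreFactor (hloop : ∀ e ∈ E, e.1 ≠ e.2) {ε : ℝ} (hε : ε ∈ Set.Icc (0:ℝ) 1)
    (S B : Finset V) (hSB : S ⊆ B) (u : V) (hu : u ∈ S)
    (a : X) (b : V → Option X) (d : (V × V → Option Y') × (V → Option (Option X)))
    (hb : b ∈ Set.range (M.thetaOn (vBoundary (graphOf E) ↑S)))
    (hd : d ∈ Set.range (M.obsRV ε ↑B)) :
    (M.P ({ω | M.θ u ω = a} ∩ {ω | M.thetaOn (vBoundary (graphOf E) ↑S) ω = b}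
        ∩ {ω | M.obsRV ε ↑B ω = d})).toReal
      = Ffun Q E S u a b d * Gfun Q E ε S B b d := by
  classical
  rw [M.core1 hε S B hSB u hu a b d hb hd]
  rw [sum_helper]
  rw [fubini_key hloop S B hSB u hu a b d]
  rw [Ffun, Gfun]
  have hcard : (B \ S).card + S.card = B.card := Finset.card_sdiff_add_card_eq_card hSB
  rw [← hcard, pow_add]
  ring

lemma coreFactorB (hloop : ∀ e ∈ E, e.1 ≠ e.2) {ε : ℝ} (hε : ε ∈ Set.Icc (0:ℝ) 1)
    (S B : Finset V) (hSB : S ⊆ B) (u : V) (hu : u ∈ S)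
    (b : V → Option X) (d : (V × V → Option Y') × (V → Option (Option X)))
    (hb : b ∈ Set.range (M.thetaOn (vBoundary (graphOf E) ↑S)))
    (hd : d ∈ Set.range (M.obsRV ε ↑B)) :
    (M.P ({ω | M.thetaOn (vBoundary (graphOf E) ↑S) ω = b}
        ∩ {ω | M.obsRV ε ↑B ω = d})).toReal
      = (∑ a : X, Ffun Q E S u a b d) * Gfun Q E ε S B b d := by
  classical
  haveI := M.probP
  have hmeas : MeasurableSet ({ω | M.thetaOn (vBoundary (graphOf E) ↑S) ω = b}
      ∩ {ω | M.obsRV ε ↑B ω = d}) :=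
    ((M.disc_thetaOn (bdry_finite S)).2 b).inter ((M.disc_obsRV ε B).2 d)
  have hpart := partition_inter M.P (M.discθ u) (R := Finset.univ)
    (by intro x _; simp) hmeas Set.univ
  simp only [Set.preimage_univ, Set.inter_univ, Set.mem_univ, Finset.filter_true] at hpart
  rw [hpart]
  have hper : ∀ a : X,
      (M.P (({ω | M.thetaOn (vBoundary (graphOf E) ↑S) ω = b}
          ∩ {ω | M.obsRV ε ↑B ω = d}) ∩ M.θ u ⁻¹' {a})).toReal
        = Ffun Q E S u a b d * Gfun Q E ε S B b d := by
    intro a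
    have hset : ({ω | M.thetaOn (vBoundary (graphOf E) ↑S) ω = b}
          ∩ {ω | M.obsRV ε ↑B ω = d}) ∩ M.θ u ⁻¹' {a}
        = {ω | M.θ u ω = a} ∩ {ω | M.thetaOn (vBoundary (graphOf E) ↑S) ω = b}
          ∩ {ω | M.obsRV ε ↑B ω = d} := by
      ext ω
      simp only [Set.mem_inter_iff, Set.mem_setOf_eq, Set.mem_preimage, Set.mem_singleton_iff]
      tauto
    rw [hset, M.coreFactor hloop hε S B hSB u hu a b d hb hd]
  rw [Finset.sum_congr rfl (fun a _ => hper a), ← Finset.sum_mul]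

/-- restriction map of observation data to the region S. -/
def gmap (E : Set (V × V)) (S : Finset V)
    (p : (V × V → Option Y') × (V → Option (Option X))) :
    (V × V → Option Y') × (V → Option (Option X)) :=
  (fun e => if e ∈ E ∧ e.1 ∈ (↑S : Set V) ∧ e.2 ∈ (↑S : Set V) then p.1 e else none,
   fun v => if v ∈ (↑S : Set V) then p.2 v else none)

lemma gmap_obsRV (S B : Finset V) (hSB : S ⊆ B) (ε : ℝ) (ω : M.Ω) :
    gmap (X := X) E S (M.obsRV ε ↑B ω) = M.obsRV ε ↑S ω := by
  have hSB' : (↑S : Set V) ⊆ ↑B := Finset.coe_subset.mpr hSB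
  refine Prod.ext (funext fun e => ?_) (funext fun v => ?_)
  · simp only [gmap]
    rw [obsRV_fst, obsRV_fst]
    by_cases h : e ∈ E ∧ e.1 ∈ (↑S : Set V) ∧ e.2 ∈ (↑S : Set V)
    · rw [if_pos h, if_pos h, if_pos ⟨h.1, hSB' h.2.1, hSB' h.2.2⟩]
    · rw [if_neg h, if_neg h]
  · simp only [gmap]
    rw [obsRV_snd, obsRV_snd]
    by_cases h : v ∈ (↑S : Set V)
    · rw [if_pos h, if_pos h, if_pos (hSB' h)]
    · rw [if_neg h, if_neg h]

lemma Ffun_congr (S : Finset V) (u : V) (a : X) (b : V → Option X)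
    {d d' : (V × V → Option Y') × (V → Option (Option X))}
    (hagree1 : ∀ e ∈ obsEdges (E := E) S, d.1 e = d'.1 e)
    (hagree2 : ∀ v ∈ S, d.2 v = d'.2 v) :
    Ffun Q E S u a b d = Ffun Q E S u a b d' := by
  classical
  rw [Ffun, Ffun]
  congr 1
  rw [FS, FS]
  have hz : ∀ v ∈ S, zof d v = zof (X := X) d' v := fun v hv => by
    rw [zof, zof, hagree2 v hv]
  have hx : ∀ v ∈ S, xof d v = xof d' v := fun v hv => by rw [xof, xof, hz v hv]
  have hy : ∀ e ∈ obsEdges (E := E) S, yof d e = yof d' e := fun e he => by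
    rw [yof, yof, hagree1 e he]
  have hfilter : {v ∈ S | (zof (X := X) d v).isSome} = {v ∈ S | (zof (X := X) d' v).isSome} :=
    Finset.filter_congr (fun v hv => by rw [hz v hv])
  refine Finset.sum_congr rfl fun σ₁ _ => ?_
  congr 1
  · refine if_congr ?_ rfl rfl
    constructor
    · rintro ⟨hA, hB, hC⟩
      refine ⟨hA, hB, fun v hv => ?_⟩
      have hv' : v ∈ {v ∈ S | (zof (X := X) d v).isSome} := hfilter ▸ hv
      rw [← hx v (Finset.mem_filter.mp hv').1]
      exact hC v hv'
    · rintro ⟨hA, hB, hC⟩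
      refine ⟨hA, hB, fun v hv => ?_⟩
      have hv' : v ∈ {v ∈ S | (zof (X := X) d' v).isSome} := hfilter ▸ hv
      rw [hx v (Finset.mem_filter.mp hv).1]
      exact hC v hv'
  · exact Finset.prod_congr rfl fun e he => by rw [hy e he]

/-- Conditional independence: given the boundary labels and the observations inside S,
the interior label is conditionally independent of the full observations. -/
lemma mainCI (hloop : ∀ e ∈ E, e.1 ≠ e.2)
    (S B : Finset V) (hSB : S ⊆ B) (u : V) (hu : u ∈ S) {ε : ℝ}
    (hε : ε ∈ Set.Icc (0:ℝ) 1) :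
    ∀ (a : X) (d : (V × V → Option Y') × (V → Option (Option X)))
      (c : (V → Option X) × ((V × V → Option Y') × (V → Option (Option X)))),
      0 < pJ3 M.P (M.θ u) (M.obsRV ε ↑B)
          (fun ω => (M.thetaOn (vBoundary (graphOf E) ↑S) ω, gmap E S (M.obsRV ε ↑B ω)))
          a d c →
      pJ3 M.P (M.θ u) (M.obsRV ε ↑B)
          (fun ω => (M.thetaOn (vBoundary (graphOf E) ↑S) ω, gmap E S (M.obsRV ε ↑B ω)))
          a d c
        * pC1 M.P
            (fun ω => (M.thetaOn (vBoundary (graphOf E) ↑S) ω, gmap E S (M.obsRV ε ↑B ω))) c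
      = pAC2 M.P (M.θ u)
            (fun ω => (M.thetaOn (vBoundary (graphOf E) ↑S) ω, gmap E S (M.obsRV ε ↑B ω))) a c
        * pDC2 M.P (M.obsRV ε ↑B)
            (fun ω => (M.thetaOn (vBoundary (graphOf E) ↑S) ω, gmap E S (M.obsRV ε ↑B ω))) d c := by
  classical
  haveI := M.probP
  rintro a d ⟨b, c2⟩ hpos
  set A := M.θ u with hA
  set B' := M.thetaOn (vBoundary (graphOf E) ↑S) with hB'
  set D := M.obsRV ε ↑B with hD
  have hne : ((fun ω => (A ω, D ω, (B' ω, gmap E S (D ω)))) ⁻¹' {(a, d, (b, c2))}).Nonempty := by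
    by_contra h
    rw [Set.not_nonempty_iff_eq_empty] at h
    rw [pJ3, h] at hpos
    simp at hpos
  obtain ⟨ω₀, hω₀⟩ := hne
  simp only [Set.mem_preimage, Set.mem_singleton_iff, Prod.mk.injEq] at hω₀
  obtain ⟨ha0, hd0, hb0, hc20⟩ := hω₀
  have hdR : d ∈ Set.range D := ⟨ω₀, hd0⟩
  have hbR : b ∈ Set.range B' := ⟨ω₀, hb0⟩
  have hc2d : gmap (X := X) E S d = c2 := by rw [← hd0]; exact hc20
  -- set identifications
  have S1 : (fun ω => (A ω, D ω, (B' ω, gmap E S (D ω)))) ⁻¹' {(a, d, (b, c2))}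
      = {ω | A ω = a} ∩ {ω | B' ω = b} ∩ {ω | D ω = d} := by
    ext ω
    simp only [Set.mem_preimage, Set.mem_singleton_iff, Prod.mk.injEq, Set.mem_inter_iff,
      Set.mem_setOf_eq]
    constructor
    · rintro ⟨h1, h2, h3, h4⟩; exact ⟨⟨h1, h3⟩, h2⟩
    · rintro ⟨⟨h1, h3⟩, h2⟩; exact ⟨h1, h2, h3, by rw [h2, hc2d]⟩
  have S4 : (fun ω => (D ω, (B' ω, gmap E S (D ω)))) ⁻¹' {(d, (b, c2))}
      = {ω | B' ω = b} ∩ {ω | D ω = d} := by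
    ext ω
    simp only [Set.mem_preimage, Set.mem_singleton_iff, Prod.mk.injEq, Set.mem_inter_iff,
      Set.mem_setOf_eq]
    constructor
    · rintro ⟨h1, h2, h3⟩; exact ⟨h2, h1⟩
    · rintro ⟨h2, h1⟩; exact ⟨h1, h2, by rw [h1, hc2d]⟩
  have S3 : (fun ω => (A ω, (B' ω, gmap E S (D ω)))) ⁻¹' {(a, (b, c2))}
      = ({ω | A ω = a} ∩ {ω | B' ω = b}) ∩ (D ⁻¹' (gmap (X := X) E S ⁻¹' {c2})) := by
    ext ω
    simp only [Set.mem_preimage, Set.mem_singleton_iff, Prod.mk.injEq, Set.mem_inter_iff,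
      Set.mem_setOf_eq]
    tauto
  have S2 : (fun ω => (B' ω, gmap E S (D ω))) ⁻¹' {(b, c2)}
      = {ω | B' ω = b} ∩ (D ⁻¹' (gmap (X := X) E S ⁻¹' {c2})) := by
    ext ω
    simp only [Set.mem_preimage, Set.mem_singleton_iff, Prod.mk.injEq, Set.mem_inter_iff,
      Set.mem_setOf_eq]
  set RD := (M.disc_obsRV ε B).1.toFinset with hRD
  have hRDsub : Set.range D ⊆ ↑RD := by
    rintro _ ⟨ω, rfl⟩
    exact (M.disc_obsRV ε B).1.mem_toFinset.mpr (Set.mem_range_self ω)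
  -- agreement of fiber elements with d on the S-coordinates
  have hagree : ∀ d', gmap (X := X) E S d' = c2 →
      (∀ e ∈ obsEdges (E := E) S, d'.1 e = d.1 e) ∧ (∀ v ∈ S, d'.2 v = d.2 v) := by
    intro d' hgd'
    have hg : gmap (X := X) E S d' = gmap (X := X) E S d := by rw [hgd', hc2d]
    constructor
    · intro e he
      obtain ⟨h1, h2, h3⟩ := mem_obsEdges.mp he
      have := congrFun (congrArg Prod.fst hg) e
      simp only [gmap] at this
      rw [if_pos ⟨h1, by simpa using h2, by simpa using h3⟩,
        if_pos ⟨h1, by simpa using h2, by simpa using h3⟩] at this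
      exact this
    · intro v hv
      have := congrFun (congrArg Prod.snd hg) v
      simp only [gmap] at this
      rw [if_pos (by simpa using hv), if_pos (by simpa using hv)] at this
      exact this
  have hFc : ∀ (a' : X) (d' : (V × V → Option Y') × (V → Option (Option X))),
      gmap (X := X) E S d' = c2 → Ffun Q E S u a' b d' = Ffun Q E S u a' b d := by
    intro a' d' hgd'
    exact Ffun_congr S u a' b (hagree d' hgd').1 (hagree d' hgd').2
  -- fiber sums
  have hmeasAB : MeasurableSet ({ω | A ω = a} ∩ {ω | B' ω = b}) :=
    ((M.discθ u).2 a).inter ((M.disc_thetaOn (bdry_finite S)).2 b)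
  have hmeasB : MeasurableSet {ω | B' ω = b} := (M.disc_thetaOn (bdry_finite S)).2 b
  have hfibmem : ∀ d' ∈ {d' ∈ RD | d' ∈ gmap (X := X) E S ⁻¹' {c2}},
      d' ∈ Set.range D ∧ gmap (X := X) E S d' = c2 := by
    intro d' hd'
    obtain ⟨h1, h2⟩ := Finset.mem_filter.mp hd'
    exact ⟨(M.disc_obsRV ε B).1.mem_toFinset.mp h1, by simpa using h2⟩
  have e3 : (M.P (({ω | A ω = a} ∩ {ω | B' ω = b})
        ∩ (D ⁻¹' (gmap (X := X) E S ⁻¹' {c2})))).toReal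
      = Ffun Q E S u a b d
        * ∑ d' ∈ {d' ∈ RD | d' ∈ gmap (X := X) E S ⁻¹' {c2}}, Gfun Q E ε S B b d' := by
    rw [partition_inter M.P (M.disc_obsRV ε B) hRDsub hmeasAB (gmap (X := X) E S ⁻¹' {c2})]
    rw [Finset.mul_sum]
    refine Finset.sum_congr rfl fun d' hd' => ?_
    obtain ⟨hd'R, hd'g⟩ := hfibmem d' hd'
    have hset : ({ω | A ω = a} ∩ {ω | B' ω = b}) ∩ D ⁻¹' {d'}
        = {ω | A ω = a} ∩ {ω | B' ω = b} ∩ {ω | D ω = d'} := rfl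
    rw [hset, M.coreFactor hloop hε S B hSB u hu a b d' hbR hd'R, hFc a d' hd'g]
  have e2 : (M.P ({ω | B' ω = b} ∩ (D ⁻¹' (gmap (X := X) E S ⁻¹' {c2})))).toReal
      = (∑ a' : X, Ffun Q E S u a' b d)
        * ∑ d' ∈ {d' ∈ RD | d' ∈ gmap (X := X) E S ⁻¹' {c2}}, Gfun Q E ε S B b d' := by
    rw [partition_inter M.P (M.disc_obsRV ε B) hRDsub hmeasB (gmap (X := X) E S ⁻¹' {c2})]
    rw [Finset.mul_sum]
    refine Finset.sum_congr rfl fun d' hd' => ?_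
    obtain ⟨hd'R, hd'g⟩ := hfibmem d' hd'
    have hset : {ω | B' ω = b} ∩ D ⁻¹' {d'} = {ω | B' ω = b} ∩ {ω | D ω = d'} := rfl
    rw [hset, M.coreFactorB hloop hε S B hSB u hu b d' hbR hd'R,
      Finset.sum_congr rfl (fun a' _ => hFc a' d' hd'g)]
  have e1 : (M.P ({ω | A ω = a} ∩ {ω | B' ω = b} ∩ {ω | D ω = d})).toReal
      = Ffun Q E S u a b d * Gfun Q E ε S B b d :=
    M.coreFactor hloop hε S B hSB u hu a b d hbR hdR
  have e4 : (M.P ({ω | B' ω = b} ∩ {ω | D ω = d})).toReal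
      = (∑ a' : X, Ffun Q E S u a' b d) * Gfun Q E ε S B b d :=
    M.coreFactorB hloop hε S B hSB u hu b d hbR hdR
  rw [pJ3, pC1, pAC2, pDC2, S1, S2, S3, S4, e1, e2, e3, e4]
  ring

end Model
/-- Lemma: monotonicity of the conditional mutual information. Giving
more observations can only decrease the conditional mutual information between an
interior label and the boundary labels. -/
theorem statement_7
    {X Y' V : Type*} [Fintype X] [Fintype Y'] [Nonempty X]
    (hcard : 2 ≤ Fintype.card X)
    (Q : X → X → Y' → ℝ)
    (hQ0 : ∀ x1 x2 y, 0 ≤ Q x1 x2 y) (hQ1 : ∀ x1 x2, ∑ y, Q x1 x2 y = 1)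
    (E : Set (V × V))
    (hloop : ∀ e ∈ E, e.1 ≠ e.2)
    (hori : ∀ u v : V, (u, v) ∈ E → (v, u) ∉ E)
    (M : Model X Y' Q E)
    (hlf : LocallyFiniteGraph (graphOf E))
    (S B : Finset V) (hSB : S ⊆ B) (u : V) (hu : u ∈ S) :
    ∀ ε ∈ Set.Icc (0:ℝ) 1,
      condMI M.P (M.θ u) (M.thetaOn (vBoundary (graphOf E) ↑S)) (M.obsRV ε ↑B)
        ≤ condMI M.P (M.θ u) (M.thetaOn (vBoundary (graphOf E) ↑S)) (M.obsRV ε ↑S) := by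
  classical
  intro ε hε
  haveI := M.probP
  have hΩ : Nonempty M.Ω := by
    by_contra h
    rw [not_nonempty_iff] at h
    have h1 : M.P Set.univ = 1 := measure_univ
    rw [Set.univ_eq_empty_iff.mpr h, measure_empty] at h1
    exact zero_ne_one h1
  haveI : Nonempty Y' := by
    obtain ⟨ω⟩ := hΩ
    exact ⟨M.Yobs (u, u) ω⟩
  have hCeq : M.obsRV ε ↑S = fun ω => Model.gmap (X := X) E S (M.obsRV ε ↑B ω) := by
    funext ω
    exact (M.gmap_obsRV S B hSB ε ω).symm
  rw [hCeq]
  refine condMI_mono_of_factor M.P _ _ _ (Model.gmap (X := X) E S) ?_ ?_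
  · exact condMI_nonneg M.P _ _ _ (M.discθ u) (M.disc_obsRV ε B)
      ((M.disc_obsRV ε B).comp' (Model.gmap (X := X) E S))
  · refine condMI_eq_zero M.P _ _ _ (M.discθ u) (M.disc_obsRV ε B)
      ((M.disc_thetaOn (Model.bdry_finite S)).pair
        ((M.disc_obsRV ε B).comp' (Model.gmap (X := X) E S))) ?_
    exact M.mainCI hloop S B hSB u hu hε

end
end

section
/- Let (Ω,ℱ,P) be a probability space, let θ be uniformly distributed on ℤ_q, let 𝒢 ⊆ ℱ be a σ-algebra, and set μ(z) = P(θ = z | 𝒢) for z ∈ ℤ_q, δ(z) := μ(z) − 1/q, and X̄ := E[δ(θ)]. Then ∑_{y ∈ ℤ_q} ( E[ δ(y + θ) ] )² ≤ q · X̄². -/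
open MeasureTheory
open scoped ENNReal

noncomputable section

private lemma aux_shift {q : ℕ} [NeZero q] (v : ZMod q → ℝ) (y : ZMod q)
    (f : ℝ → ℝ) : ∑ z : ZMod q, f (v (y + z)) = ∑ z : ZMod q, f (v z) :=
  Fintype.sum_equiv (Equiv.addLeft y) _ _ fun z => rfl

private lemma aux_pt {q : ℕ} [NeZero q] (hq : 0 < q) (v : ZMod q → ℝ)
    (hsum : ∑ z : ZMod q, v z = 1) (y : ZMod q) :
    (∑ z : ZMod q, v (y + z) * v z ≤ ∑ z : ZMod q, v z * v z) ∧
      (2 / (q : ℝ) ≤ ∑ z : ZMod q, v z * v z + ∑ z : ZMod q, v (y + z) * v z) := by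
  set A : ℝ := ∑ z : ZMod q, v z * v z with hA
  set B : ℝ := ∑ z : ZMod q, v (y + z) * v z with hB
  have hA' : ∑ z : ZMod q, v (y + z) * v (y + z) = A :=
    aux_shift v y (fun t => t * t)
  have hsum' : ∑ z : ZMod q, v (y + z) = 1 := by
    rw [aux_shift v y (fun t => t), hsum]
  have hexp1 : ∑ z : ZMod q, (v (y + z) - v z) ^ 2 = 2 * A - 2 * B := by
    have : ∀ z : ZMod q, (v (y + z) - v z) ^ 2
        = v (y + z) * v (y + z) - 2 * (v (y + z) * v z) + v z * v z := fun z => by ring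
    rw [Finset.sum_congr rfl fun z _ => this z, Finset.sum_add_distrib,
      Finset.sum_sub_distrib, ← Finset.mul_sum, hA', ← hB, ← hA]
    ring
  have hexp2 : ∑ z : ZMod q, (v (y + z) + v z) ^ 2 = 2 * A + 2 * B := by
    have : ∀ z : ZMod q, (v (y + z) + v z) ^ 2
        = v (y + z) * v (y + z) + 2 * (v (y + z) * v z) + v z * v z := fun z => by ring
    rw [Finset.sum_congr rfl fun z _ => this z, Finset.sum_add_distrib,
      Finset.sum_add_distrib, ← Finset.mul_sum, hA', ← hB, ← hA]
    ring
  have hq0 : (0 : ℝ) < q := by exact_mod_cast hq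
  constructor
  · have h1 : 0 ≤ ∑ z : ZMod q, (v (y + z) - v z) ^ 2 :=
      Finset.sum_nonneg fun z _ => sq_nonneg _
    rw [hexp1] at h1
    linarith
  · have h2 : (∑ z : ZMod q, (v (y + z) + v z)) ^ 2
        ≤ (Finset.univ : Finset (ZMod q)).card * ∑ z : ZMod q, (v (y + z) + v z) ^ 2 :=
      sq_sum_le_card_mul_sum_sq
    rw [Finset.sum_add_distrib, hsum, hsum', hexp2, Finset.card_univ, ZMod.card q] at h2
    norm_num at h2
    rw [div_le_iff₀ hq0]
    linarith

/-- Lemma: a maximal inequality for the centered posterior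
marginals on ℤ_q. -/
theorem statement_19
    (q : ℕ) [NeZero q] (hq : 2 ≤ q)
    {Ω : Type*} [mΩ : MeasurableSpace Ω] (P : Measure Ω) [IsProbabilityMeasure P]
    (θ : Ω → ZMod q) (hθ : @Measurable Ω (ZMod q) mΩ ⊤ θ)
    (hunif : ∀ z : ZMod q, P {ω | θ ω = z} = (q : ℝ≥0∞)⁻¹)
    (m : MeasurableSpace Ω) (hm : m ≤ mΩ)
    (μ : ZMod q → Ω → ℝ)
    (hμ : ∀ z : ZMod q, μ z = P[Set.indicator {ω | θ ω = z} (fun _ => (1 : ℝ)) | m])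
    (δ : ZMod q → Ω → ℝ) (hδ : ∀ z ω, δ z ω = μ z ω - (q : ℝ)⁻¹)
    (Xbar : ℝ) (hX : Xbar = ∫ ω, δ (θ ω) ω ∂P) :
    ∑ y : ZMod q, (∫ ω, δ (y + θ ω) ω ∂P) ^ 2 ≤ (q : ℝ) * Xbar ^ 2 := by
  have hq0 : (0 : ℝ) < q := by positivity
  set I : ZMod q → Ω → ℝ := fun z => Set.indicator {ω | θ ω = z} (fun _ => (1 : ℝ)) with hI
  have hIite : ∀ z ω, I z ω = if θ ω = z then 1 else 0 := by
    intro z ω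
    simp [hI, Set.indicator_apply, Set.mem_setOf_eq]
  have hset : ∀ z : ZMod q, MeasurableSet[mΩ] {ω | θ ω = z} := fun z =>
    hθ (show MeasurableSet[⊤] ({z} : Set (ZMod q)) from MeasurableSpace.measurableSet_top)
  have hIint : ∀ z, Integrable (I z) P :=
    fun z => Integrable.indicator (f := fun _ => (1:ℝ)) (s := {ω | θ ω = z}) (μ := P)
      (integrable_const 1) (hset z)
  have hμint : ∀ z, Integrable (μ z) P := fun z => (hμ z) ▸ integrable_condExp
  have hμmeas : ∀ z, StronglyMeasurable[m] (μ z) := fun z => (hμ z) ▸ stronglyMeasurable_condExp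
  have hμmeas' : ∀ z, AEStronglyMeasurable[mΩ] (μ z) P := fun z =>
    ((hμmeas z).mono hm).aestronglyMeasurable
  -- bounds 0 ≤ μ z ≤ 1 a.e.
  have hμ0 : ∀ z, 0 ≤ᵐ[P] μ z := by
    intro z
    rw [hμ z]
    exact condExp_nonneg (Filter.Eventually.of_forall fun ω =>
      Set.indicator_nonneg (fun _ _ => zero_le_one) ω)
  have hμ1 : ∀ z, μ z ≤ᵐ[P] fun _ => (1 : ℝ) := by
    intro z
    rw [hμ z]
    have h1 : I z ≤ᵐ[P] fun _ => (1 : ℝ) := Filter.Eventually.of_forall fun ω => by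
      rw [hIite z ω]; split <;> norm_num
    have h2 : P[I z|m] ≤ᵐ[P] P[(fun _ => (1:ℝ))|m] :=
      condExp_mono (hIint z) (integrable_const 1) h1
    have h3 : P[(fun _ => (1:ℝ))|m] = fun _ => (1:ℝ) := condExp_const hm (1:ℝ)
    rwa [h3] at h2
  -- sum of μ z is 1 a.e.
  have hsumI : (fun ω => ∑ z : ZMod q, I z ω) = fun _ => (1 : ℝ) := by
    funext ω
    simp only [hIite]
    rw [Finset.sum_ite_eq Finset.univ (θ ω) (fun _ => (1:ℝ))]
    simp
  have hsum1 : ∀ᵐ ω ∂P, ∑ z : ZMod q, μ z ω = 1 := by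
    have h2 : (fun ω => ∑ z : ZMod q, μ z ω) =ᵐ[P] P[fun ω => ∑ z : ZMod q, I z ω|m] := by
      have hcs := condExp_finsetSum (fun z (_ : z ∈ (Finset.univ : Finset (ZMod q))) => hIint z)
        (m := m)
      have heq : (fun ω => ∑ z : ZMod q, μ z ω)
          = ∑ z : ZMod q, P[I z|m] := by
        funext ω
        rw [Finset.sum_apply]
        exact Finset.sum_congr rfl fun z _ => by rw [hμ z]
      rw [heq]
      have heq2 : (fun ω => ∑ z : ZMod q, I z ω) = ∑ z : ZMod q, I z :=
        (Finset.sum_fn Finset.univ I).symm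
      rw [heq2]
      exact hcs.symm
    have h3 : P[fun ω => ∑ z : ZMod q, I z ω|m] = fun _ => (1:ℝ) := by
      rw [hsumI]
      exact condExp_const hm 1
    filter_upwards [h2] with ω hω
    rw [hω, h3]
  -- integrability of products
  have hprod_int : ∀ z w : ZMod q, Integrable (fun ω => μ z ω * μ w ω) P := by
    intro z w
    refine (hμint w).mono ((hμmeas' z).mul (hμmeas' w)) ?_
    filter_upwards [hμ0 z, hμ1 z] with ω h0 h1
    have h0' : (0:ℝ) ≤ μ z ω := h0
    rw [Real.norm_eq_abs, Real.norm_eq_abs, abs_mul]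
    have : |μ z ω| ≤ 1 := abs_le.mpr ⟨by linarith, h1⟩
    nlinarith [abs_nonneg (μ w ω)]
  have hIprod_int : ∀ z w : ZMod q, Integrable (fun ω => μ w ω * I z ω) P := by
    intro z w
    refine (hIint z).mono ((hμmeas' w).mul (hIint z).aestronglyMeasurable) ?_
    filter_upwards [hμ0 w, hμ1 w] with ω h0 h1
    have h0' : (0:ℝ) ≤ μ w ω := h0
    rw [Real.norm_eq_abs, Real.norm_eq_abs, abs_mul]
    have : |μ w ω| ≤ 1 := abs_le.mpr ⟨by linarith, h1⟩
    nlinarith [abs_nonneg (I z ω)]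
  -- key identity: ∫ μ w * I z = ∫ μ w * μ z
  have hkey : ∀ z w : ZMod q, ∫ ω, μ w ω * I z ω ∂P = ∫ ω, μ w ω * μ z ω ∂P := by
    intro z w
    have hpull : P[(μ w) * (I z)|m] =ᵐ[P] (μ w) * P[I z|m] :=
      condExp_mul_of_stronglyMeasurable_left (hμmeas w) (hIprod_int z w) (hIint z)
    have h1 : ∫ ω, (P[(μ w) * (I z)|m]) ω ∂P = ∫ ω, (μ w * I z) ω ∂P :=
      integral_condExp hm
    have h2 : ∫ ω, (P[(μ w) * (I z)|m]) ω ∂P = ∫ ω, μ w ω * μ z ω ∂P := by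
      refine integral_congr_ae (hpull.trans ?_)
      refine Filter.Eventually.of_forall fun ω => ?_
      simp [hμ z, hI]
    rw [← h2, h1]
    rfl
  -- T y := ∑ z, ∫ μ (y+z) * μ z
  set T : ZMod q → ℝ := fun y => ∑ z : ZMod q, ∫ ω, μ (y + z) ω * μ z ω ∂P with hT
  have hTint : ∀ y : ZMod q, Integrable (fun ω => ∑ z : ZMod q, μ (y + z) ω * μ z ω) P :=
    fun y => integrable_finset_sum _ fun z _ => hprod_int (y + z) z
  have hTeq : ∀ y : ZMod q, T y = ∫ ω, ∑ z : ZMod q, μ (y + z) ω * μ z ω ∂P :=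
    fun y => (integral_finset_sum _ fun z _ => hprod_int (y + z) z).symm
  -- a y = T y - 1/q
  have ha : ∀ y : ZMod q, ∫ ω, δ (y + θ ω) ω ∂P = T y - (q : ℝ)⁻¹ := by
    intro y
    have hpt : ∀ ω, μ (y + θ ω) ω = ∑ z : ZMod q, μ (y + z) ω * I z ω := by
      intro ω
      simp only [hIite, mul_ite, mul_one, mul_zero]
      rw [Finset.sum_ite_eq Finset.univ (θ ω) (fun z => μ (y + z) ω)]
      simp
    have hμθint : Integrable (fun ω => μ (y + θ ω) ω) P := by
      have : (fun ω => μ (y + θ ω) ω) = fun ω => ∑ z : ZMod q, μ (y + z) ω * I z ω :=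
        funext hpt
      rw [this]
      exact integrable_finset_sum _ fun z _ => hIprod_int z (y + z)
    have h1 : ∫ ω, μ (y + θ ω) ω ∂P = T y := by
      calc ∫ ω, μ (y + θ ω) ω ∂P = ∫ ω, ∑ z : ZMod q, μ (y + z) ω * I z ω ∂P := by
            exact integral_congr_ae (Filter.Eventually.of_forall hpt)
        _ = ∑ z : ZMod q, ∫ ω, μ (y + z) ω * I z ω ∂P :=
            integral_finset_sum _ fun z _ => hIprod_int z (y + z)
        _ = T y := Finset.sum_congr rfl fun z _ => hkey z (y + z)
    have h2 : (fun ω => δ (y + θ ω) ω) = fun ω => μ (y + θ ω) ω - (q:ℝ)⁻¹ :=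
      funext fun ω => hδ _ ω
    rw [h2, integral_sub hμθint (integrable_const _), h1, integral_const]
    simp
  -- integrated inequalities
  have hqn : 0 < q := Nat.lt_of_lt_of_le (by norm_num) hq
  have hTle : ∀ y : ZMod q, T y ≤ T 0 := by
    intro y
    rw [hTeq y, hTeq 0]
    refine integral_mono_ae (hTint y) (hTint 0) ?_
    filter_upwards [hsum1] with ω hω
    have := (aux_pt hqn (fun z => μ z ω) hω y).1
    simpa using this
  have hTge : ∀ y : ZMod q, 2 / (q : ℝ) ≤ T 0 + T y := by
    intro y
    have : T 0 + T y = ∫ ω, ((∑ z : ZMod q, μ (0 + z) ω * μ z ω)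
        + ∑ z : ZMod q, μ (y + z) ω * μ z ω) ∂P := by
      rw [hTeq 0, hTeq y, integral_add (hTint 0) (hTint y)]
    rw [this]
    have hconst : ∫ _ω : Ω, (2 / (q:ℝ)) ∂P = 2 / (q:ℝ) := by
      rw [integral_const]; simp
    rw [← hconst]
    refine integral_mono_ae (integrable_const _) ((hTint 0).add (hTint y)) ?_
    filter_upwards [hsum1] with ω hω
    have := (aux_pt hqn (fun z => μ z ω) hω y).2
    simpa using this
  -- Xbar = T 0 - 1/q
  have hXbar : Xbar = T 0 - (q : ℝ)⁻¹ := by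
    rw [hX, ← ha 0]
    congr 1
    funext ω
    rw [zero_add]
  have hXnn : 0 ≤ Xbar := by
    have := hTge 0
    rw [hXbar]
    rw [div_le_iff₀ hq0] at this
    have h1q : (q:ℝ)⁻¹ ≤ T 0 := by
      rw [inv_eq_one_div, div_le_iff₀ hq0]
      linarith
    linarith
  -- conclude
  have hbound : ∀ y : ZMod q, (∫ ω, δ (y + θ ω) ω ∂P) ^ 2 ≤ Xbar ^ 2 := by
    intro y
    rw [ha y]
    refine sq_le_sq' ?_ ?_
    · have h2q := hTge y
      have h2q' : 2 * (q:ℝ)⁻¹ ≤ T 0 + T y := by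
        rw [div_eq_mul_inv] at h2q; linarith
      rw [hXbar]
      linarith
    · rw [hXbar]
      linarith [hTle y]
  calc ∑ y : ZMod q, (∫ ω, δ (y + θ ω) ω ∂P) ^ 2
      ≤ ∑ _y : ZMod q, Xbar ^ 2 := Finset.sum_le_sum fun y _ => hbound y
    _ = (q : ℝ) * Xbar ^ 2 := by
        rw [Finset.sum_const, Finset.card_univ, ZMod.card q, nsmul_eq_mul]

end
end
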